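/- arXiv:1512.06341 — 2 statements merged into one kernel-verified Lean document; each statement's English description precedes it below -/
import Mathlib

section
/- Let Γ be a finitely generated group with a central element h such that Γ̄ = Γ/⟨h⟩ is an orbifold group, and let ρ: Γ → Homeo(ℝ) be a representation with ρ(h) equal to the translation x ↦ x+1, so that ρ induces a (μ,τ,σ)-representation ρ̄ of Γ̄ on the circle S¹ = ℝ/ℤ. Let μ̃ ⊂ ℝ be the preimage of μ under ℝ → ℝ/ℤ. Then every modification ρ̄′ of ρ̄ on a periodic gap lifts to a representation ρ*: Γ → Homeo(ℝ) with ρ*(h) the translation by 1 and inducing ρ̄′ on ℝ/ℤ, and ρ* is uniquely determined by the property that for every γ ∈ Γ the restrictions of ρ*(γ) and ρ(γ) to μ̃ coincide. -/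
open Set Filter Topology
open scoped commutatorElement

noncomputable section

namespace PAFlow

/-- The circle, realized as `ℝ / ℤ`. -/
abbrev S1 : Type := AddCircle (1 : ℝ)

instance {α : Type*} [TopologicalSpace α] : Group (α ≃ₜ α) where
  mul f g := g.trans f
  one := Homeomorph.refl α
  inv := Homeomorph.symm
  mul_assoc f g h := Homeomorph.ext fun _ => rfl
  one_mul f := Homeomorph.ext fun _ => rfl
  mul_one f := Homeomorph.ext fun _ => rfl
  inv_mul_cancel f := Homeomorph.ext fun x => f.symm_apply_apply x

/-- The canonical representative in `[0,1)` of a point of the circle. -/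
noncomputable def pos1 (x : S1) : ℝ := (AddCircle.equivIco 1 0 x : ℝ)

/-- The open positively-oriented arc from `a` to `c`; when `a = c` it is the complement
of `{a}` (full circle minus the point). -/
def oArc (a c : S1) : Set S1 :=
  if a = c then {a}ᶜ else {b : S1 | 0 < pos1 (b - a) ∧ pos1 (b - a) < pos1 (c - a)}

/-- The closed positively-oriented arc from `a` to `c`; when `a = c` it is the whole circle. -/
def cArc (a c : S1) : Set S1 :=
  if a = c then Set.univ else {b : S1 | pos1 (b - a) ≤ pos1 (c - a)}

/-- A homeomorphism of the circle preserves orientation if it preserves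
(strict) positively-oriented arcs. -/
def OrientPres (f : S1 ≃ₜ S1) : Prop :=
  ∀ a b c : S1, b ∈ oArc a c → f b ∈ oArc (f a) (f c)

/-- A homeomorphism of the circle reverses orientation if it reverses
(strict) positively-oriented arcs. -/
def OrientRev (f : S1 ≃ₜ S1) : Prop :=
  ∀ a b c : S1, b ∈ oArc a c → f b ∈ oArc (f c) (f a)

/-- A gap of `μ` is a connected component of the complement of `μ`. -/
def IsGap (μ : Set S1) (I : Set S1) : Prop :=
  ∃ x ∈ μᶜ, I = connectedComponentIn μᶜ x

/-- The type of gaps of `μ`. -/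
abbrev Gap (μ : Set S1) : Type := {I : Set S1 // IsGap μ I}

/-- The data of the finite-order homeomorphism `τ : μ → μ`, of order `k`, fixed point free,
preserving the cyclic order, and such that the closed arcs `[τ^[i] x, τ^[i+1] x]` cover the
circle while the corresponding open arcs are pairwise disjoint. -/
structure TauData (μ : Set S1) (k : ℕ) : Type where
  τ : S1 → S1
  k_pos : 0 < k
  mapsTo : Set.MapsTo τ μ μ
  bijOn : Set.BijOn τ μ μ
  contOn : ContinuousOn τ μ
  fixfree : ∀ x ∈ μ, τ x ≠ x
  order_k : ∀ x ∈ μ, τ^[k] x = x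
  ordPres : ∀ x ∈ μ, ∀ y ∈ μ, ∀ z ∈ μ, y ∈ oArc x z → τ y ∈ oArc (τ x) (τ z)
  arcCover : ∀ x ∈ μ, (⋃ i ∈ Finset.range k, cArc (τ^[i] x) (τ^[i + 1] x)) = Set.univ
  arcDisj : ∀ x ∈ μ, ∀ i < k, ∀ j < k, i ≠ j →
    Disjoint (oArc (τ^[i] x) (τ^[i + 1] x)) (oArc (τ^[j] x) (τ^[j + 1] x))

/-- `ρ` is a `(μ,τ,σ)`-representation. -/
structure IsMTSRep {Γ : Type*} [Group Γ] (ρ : Γ →* (S1 ≃ₜ S1)) (μ : Set S1) (k : ℕ)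
    (T : TauData μ k) (σg : Γ →* Equiv.Perm (Gap μ)) : Prop where
  perfect : Perfect μ
  nonempty : μ.Nonempty
  invariant : ∀ γ : Γ, (ρ γ) '' μ = μ
  minimal : ∀ ν : Set S1, ν.Nonempty → IsClosed ν → (∀ γ : Γ, (ρ γ) '' ν ⊆ ν) → μ ⊆ ν
  orient : ∀ γ : Γ, OrientPres (ρ γ) ∨ OrientRev (ρ γ)
  commPres : ∀ γ : Γ, OrientPres (ρ γ) → ∀ x ∈ μ, ρ γ (T.τ x) = T.τ (ρ γ x)
  commRev : ∀ γ : Γ, OrientRev (ρ γ) → ∀ x ∈ μ, ρ γ (T.τ x) = (T.τ)^[k - 1] (ρ γ x)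
  gapAct : ∀ (γ : Γ) (I : Gap μ), ((σg γ I : Gap μ) : Set S1) = (ρ γ) '' (I : Set S1)

/-- The stabilizer in `Γ` of a gap `I`, for the action `σg` on gaps. -/
def gapStab {Γ : Type*} [Group Γ] {μ : Set S1} (σg : Γ →* Equiv.Perm (Gap μ)) (I : Gap μ) :
    Subgroup Γ where
  carrier := {γ : Γ | σg γ I = I}
  one_mem' := by simp
  mul_mem' := by
    intro x y hx hy
    have hx' : σg x I = I := hx
    have hy' : σg y I = I := hy
    show σg (x * y) I = I
    rw [map_mul, Equiv.Perm.mul_apply, hy', hx']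
  inv_mem' := by
    intro x hx
    have hx' : σg x I = I := hx
    show σg x⁻¹ I = I
    have h : σg x⁻¹ (σg x I) = I := by
      rw [← Equiv.Perm.mul_apply, ← map_mul]; simp
    rw [hx'] at h
    exact h

/-- The union `𝔍` of all the iterates of the gap `I₀`. -/
def gapOrbit {Γ : Type*} [Group Γ] {μ : Set S1} (σg : Γ →* Equiv.Perm (Gap μ))
    (I₀ : Gap μ) : Set S1 :=
  ⋃ γ : Γ, ((σg γ I₀ : Gap μ) : Set S1)

/-- `f` restricts to a homeomorphism of the closure of `I` (the closure being compact,
a continuous bijection of it is automatically a homeomorphism). -/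
def IsClosureHomeo (f : S1 → S1) (I : Set S1) : Prop :=
  ContinuousOn f (closure I) ∧ Set.BijOn f (closure I) (closure I)

/-- `ρ'` is a modification of `ρ` on the gap `I₀` by `f₀` (with respect to the
distinguished element `ci` generating the stabilizer of `I₀`). -/
structure IsModification {Γ : Type*} [Group Γ] (ρ ρ' : Γ →* (S1 ≃ₜ S1)) (μ : Set S1) (k : ℕ)
    (T : TauData μ k) (σg : Γ →* Equiv.Perm (Gap μ)) (I₀ : Gap μ) (ci : Γ)
    (f₀ : S1 → S1) : Prop where
  rep' : IsMTSRep ρ' μ k T σg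
  eq_off : ∀ (γ : Γ) (x : S1), x ∉ gapOrbit σg I₀ → ρ' γ x = ρ γ x
  on_gap : ∀ x ∈ (I₀ : Set S1), ρ' ci x = f₀ x

/-- The (finite) `τ`-orbit of a point. -/
def tauOrbit {μ : Set S1} {k : ℕ} (T : TauData μ k) (x : S1) : Set S1 :=
  {y : S1 | ∃ j < k, (T.τ)^[j] x = y}

/-- The limiting behaviour required of a subsequence in the (k)-convergence property:
there are two `τ`-orbits (of points `xm`, `xp` of `μ`) such that on each compact subset of
the open arc `]τ^[i] xm, τ^[i+1] xm[` the sequence converges uniformly to `τ^[i] xp`. -/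
def KConvSeq (F : ℕ → (S1 ≃ₜ S1)) (μ : Set S1) (k : ℕ) (τ : S1 → S1) : Prop :=
  ∃ xm ∈ μ, ∃ xp ∈ μ, ∀ i < k, ∀ K : Set S1,
    K ⊆ oArc (τ^[i] xm) (τ^[i + 1] xm) → IsCompact K →
      TendstoUniformlyOn (fun n x => (F n) x) (fun _ => τ^[i] xp) atTop K

/-- The (discrete) (k)-convergence property. -/
def HasKConv {Γ : Type*} [Group Γ] (ρ : Γ →* (S1 ≃ₜ S1)) (μ : Set S1) (k : ℕ)
    (τ : S1 → S1) : Prop :=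
  ∀ γs : ℕ → Γ, ∃ φ : ℕ → ℕ, StrictMono φ ∧
    ((∀ m n : ℕ, ρ (γs (φ m)) = ρ (γs (φ n))) ∨
      KConvSeq (fun n => ρ (γs (φ n))) μ k τ)

/-- The almost (k)-convergence property. -/
def HasAlmostKConv {Γ : Type*} [Group Γ] (ρ : Γ →* (S1 ≃ₜ S1)) (μ : Set S1) (k : ℕ)
    (τ : S1 → S1) (σg : Γ →* Equiv.Perm (Gap μ)) : Prop :=
  ∀ γs : ℕ → Γ, ∃ φ : ℕ → ℕ, StrictMono φ ∧
    ((∀ m n : ℕ, ρ (γs (φ m)) = ρ (γs (φ n))) ∨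
      (∃ a γ : Γ, (∃ I : Gap μ, σg γ I = I) ∧
        ∃ p : ℕ → ℤ, ∀ n : ℕ, ρ (γs (φ n)) = ρ (γ ^ (p n) * a)) ∨
      KConvSeq (fun n => ρ (γs (φ n))) μ k τ)

/-- `x` is a topologically attracting fixed point of `f`. -/
def TopAttracting (f : S1 → S1) (x : S1) : Prop :=
  f x = x ∧ ∃ U ∈ 𝓝 x, TendstoUniformlyOn (fun n y => f^[n] y) (fun _ => x) atTop U

/-- `x` is a topologically hyperbolic (attracting or repelling) fixed point of the
homeomorphism `f`. -/
def HypFixed (f : S1 ≃ₜ S1) (x : S1) : Prop :=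
  TopAttracting f x ∨ TopAttracting f.symm x

/-- `x` is a topologically attracting fixed point of `f` within the set `s`. -/
def TopAttractingOn (f : S1 → S1) (s : Set S1) (x : S1) : Prop :=
  f x = x ∧ ∃ U ∈ 𝓝[s] x, TendstoUniformlyOn (fun n y => f^[n] y) (fun _ => x) atTop U

/-- `ρ` is `μ`-faithful. -/
def MuFaithful {Γ : Type*} [Group Γ] (ρ : Γ →* (S1 ≃ₜ S1)) (μ : Set S1) : Prop :=
  ∀ γ : Γ, (∀ x ∈ μ, ρ γ x = x) → γ = 1

/-- `ρ` is non-elementary: it has no finite orbit in the circle. -/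
def NonElementary {Γ : Type*} [Group Γ] (ρ : Γ →* (S1 ≃ₜ S1)) : Prop :=
  ∀ x : S1, ¬ (Set.range fun γ : Γ => ρ γ x).Finite

/-- A presentation of a group `Γ` as the fundamental group of a compact 2-orbifold with
nonempty boundary:  generators `a i`, `b i` (handles, or crosscaps when non-orientable, in
which case the `b i` are trivial), torsion generators `d j` of orders `α j ≥ 2`, and
boundary generators `c i`, `q ≥ 1`, subject to the defining relations; being a presentation
is expressed by the universal lifting property. -/
structure OrbifoldPresentation (Γ : Type*) [Group Γ] : Type _ where
  orientable : Bool
  g : ℕ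
  p : ℕ
  q : ℕ
  a : Fin g → Γ
  b : Fin g → Γ
  d : Fin p → Γ
  c : Fin q → Γ
  α : Fin p → ℕ
  q_pos : 1 ≤ q
  α_two : ∀ j, 2 ≤ α j
  b_trivial : orientable = false → ∀ i, b i = 1
  rel_d : ∀ j, d j ^ (α j) = 1
  rel_long : (List.ofFn c).prod =
    (if orientable then (List.ofFn fun i => ⁅a i, b i⁆).prod
      else (List.ofFn fun i => (a i) ^ 2).prod) * (List.ofFn d).prod
  generates : Subgroup.closure
    (Set.range a ∪ Set.range b ∪ Set.range d ∪ Set.range c) = ⊤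
  liftUnique : ∀ (H : Type) (_ : Group H) (fa fb : Fin g → H) (fd : Fin p → H)
    (fc : Fin q → H),
    (orientable = false → ∀ i, fb i = 1) →
    (∀ j, fd j ^ (α j) = 1) →
    ((List.ofFn fc).prod =
      (if orientable then (List.ofFn fun i => ⁅fa i, fb i⁆).prod
        else (List.ofFn fun i => (fa i) ^ 2).prod) * (List.ofFn fd).prod) →
    ∃! φ : Γ →* H, (∀ i, φ (a i) = fa i) ∧ (∀ i, φ (b i) = fb i) ∧
      (∀ j, φ (d j) = fd j) ∧ (∀ i, φ (c i) = fc i)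


/-- `F : ℝ → ℝ` is a lift of the circle map `f` through the projection `ℝ → ℝ/ℤ`. -/
def IsLiftOf (F : ℝ → ℝ) (f : S1 → S1) : Prop :=
  ∀ x : ℝ, ((F x : ℝ) : S1) = f ((x : ℝ) : S1)

/-- Formal letters for words in the generators of an orbifold group presentation. -/
inductive OLetter (g p : ℕ) : Type
  | ga : Fin g → Bool → OLetter g p
  | gb : Fin g → Bool → OLetter g p
  | gd : Fin p → Bool → OLetter g p

/-- Evaluation of a letter in the group. -/
def evLetter {Γ : Type*} [Group Γ] (P : OrbifoldPresentation Γ) :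
    OLetter P.g P.p → Γ
  | .ga i bb => if bb then (P.a i)⁻¹ else P.a i
  | .gb i bb => if bb then (P.b i)⁻¹ else P.b i
  | .gd j bb => if bb then (P.d j)⁻¹ else P.d j

/-- Evaluation of a word (a list of letters), multiplying from left to right. -/
def evWord {Γ : Type*} [Group Γ] (P : OrbifoldPresentation Γ)
    (w : List (OLetter P.g P.p)) : Γ :=
  (w.map (evLetter P)).prod

/-- A word is admissible if, in the non-orientable case, it uses no `b`-letters. -/
def Admissible {Γ : Type*} [Group Γ] (P : OrbifoldPresentation Γ)
    (w : List (OLetter P.g P.p)) : Prop :=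
  P.orientable = false → ∀ l ∈ w, ∀ (i : Fin P.g) (bb : Bool), l ≠ OLetter.gb i bb

/-- The distinguished word `w₀` representing `c₁`:
`[a₁,b₁]⋯[a_g,b_g]d₁⋯d_p` in the orientable case, `a₁²⋯a_g²d₁⋯d_p` otherwise. -/
def w0 {Γ : Type*} [Group Γ] (P : OrbifoldPresentation Γ) : List (OLetter P.g P.p) :=
  (if P.orientable then
    (List.ofFn fun i : Fin P.g =>
      ([OLetter.ga i false, OLetter.gb i false, OLetter.ga i true, OLetter.gb i true] :
        List (OLetter P.g P.p))).flatten
   else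
    (List.ofFn fun i : Fin P.g =>
      ([OLetter.ga i false, OLetter.ga i false] : List (OLetter P.g P.p))).flatten)
  ++ (List.ofFn fun j : Fin P.p => OLetter.gd j false)

/-- The length `ℓ` of `w₀`. -/
def w0Len {Γ : Type*} [Group Γ] (P : OrbifoldPresentation Γ) : ℕ :=
  (if P.orientable then 4 * P.g else 2 * P.g) + P.p

/-- Iterated images `I_n` of the gap `I₀` under the successive elements of the list `l`:
`I_{n+1} = σ(l_n) I_n`. -/
def gapSeq {Γ : Type*} [Group Γ] {μ : Set S1} (σg : Γ →* Equiv.Perm (Gap μ))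
    (I₀ : Gap μ) (l : List Γ) : ℕ → Gap μ
  | 0 => I₀
  | n + 1 => σg (l.getD n 1) (gapSeq σg I₀ l n)

end PAFlow

namespace PAFlow
namespace S11

lemma pos1_coe (t : ℝ) : pos1 ((t:ℝ) : S1) = Int.fract t := by
  simp [pos1, AddCircle.coe_equivIco_mk_apply]

lemma coe_int (n : ℤ) : (((n:ℝ)) : S1) = 0 := by
  rw [QuotientAddGroup.eq_zero_iff]; exact ⟨n, by simp⟩

lemma coe_pos1 (s : S1) : ((pos1 s : ℝ) : S1) = s := by
  induction s using QuotientAddGroup.induction_on with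
  | H t =>
    rw [pos1_coe, Int.fract, sub_eq_add_neg, QuotientAddGroup.mk_add]
    have : ((-(⌊t⌋:ℝ) : ℝ) : S1) = 0 := by
      rw [show (-(⌊t⌋:ℝ)) = ((-⌊t⌋ : ℤ) : ℝ) by push_cast; ring, coe_int]
    rw [this, add_zero]

lemma pos1_nonneg (s : S1) : 0 ≤ pos1 s := (AddCircle.equivIco 1 0 s).2.1

lemma pos1_lt_one (s : S1) : pos1 s < 1 := by
  have := (AddCircle.equivIco 1 0 s).2.2
  simpa [pos1] using this

lemma pos1_zero : pos1 (0 : S1) = 0 := by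
  have := pos1_coe 0; simpa using this

lemma pos1_eq_zero {s : S1} (hs : pos1 s = 0) : s = 0 := by
  have := coe_pos1 s; rw [hs] at this; simpa using this.symm

lemma pos1_inj {s t : S1} (hs : pos1 s = pos1 t) : s = t := by
  rw [← coe_pos1 s, ← coe_pos1 t, hs]

lemma pos1_coe_of_mem {t : ℝ} (h0 : 0 ≤ t) (h1 : t < 1) : pos1 ((t:ℝ):S1) = t := by
  rw [pos1_coe, Int.fract_eq_self.2 ⟨h0, h1⟩]

lemma coe_sub (a b : ℝ) : ((a - b : ℝ) : S1) = (a : S1) - (b : S1) :=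
  QuotientAddGroup.mk_sub _ a b

/-- `pos1` of the difference of two lifts within a unit window. -/
lemma pos1_sub_coe {t u : ℝ} (h0 : t ≤ u) (h1 : u < t + 1) :
    pos1 ((u : S1) - (t : S1)) = u - t := by
  rw [← coe_sub, pos1_coe_of_mem (by linarith) (by linarith)]

lemma mem_oArc_iff {a c : S1} (hac : a ≠ c) {b : S1} :
    b ∈ oArc a c ↔ 0 < pos1 (b - a) ∧ pos1 (b - a) < pos1 (c - a) := by
  rw [oArc, if_neg hac]; rfl

lemma mem_oArc_self_iff {a b : S1} : b ∈ oArc a a ↔ b ≠ a := by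
  rw [oArc, if_pos rfl]; simp

lemma coe_ne_of_lt {t u : ℝ} (h0 : t < u) (h1 : u < t + 1) : (t : S1) ≠ (u : S1) := by
  intro he
  have : pos1 ((u : S1) - (t : S1)) = u - t := pos1_sub_coe h0.le h1
  rw [← he] at this
  simp only [sub_self, pos1_zero] at this
  linarith

/-- A circle self-map with a strictly monotone lift commuting with the unit translation
preserves positively-oriented arcs. -/
lemma orientPres_core {F : ℝ → ℝ} (hm : StrictMono F) (hp : ∀ x : ℝ, F (x + 1) = F x + 1)
    {f : S1 → S1} (hf : ∀ t : ℝ, f ((t : ℝ) : S1) = ((F t : ℝ) : S1)) :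
    ∀ a b c : S1, b ∈ oArc a c → f b ∈ oArc (f a) (f c) := by
  intro a b c hb
  set t := pos1 a with htdef
  have hta : ((t : ℝ) : S1) = a := coe_pos1 a
  have key : ∀ s : ℝ, 0 ≤ s → s < 1 →
      pos1 (f ((t + s : ℝ) : S1) - f ((t : ℝ) : S1)) = F (t + s) - F t := by
    intro s hs0 hs1
    have hb1 : F t ≤ F (t + s) := hm.monotone (by linarith)
    have hb2 : F (t + s) < F t + 1 := by
      rw [← hp t]; exact hm (by linarith)
    rw [hf, hf, pos1_sub_coe hb1 hb2]
  by_cases hac : a = c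
  · subst hac
    rw [mem_oArc_self_iff] at hb ⊢
    set β := pos1 (b - a) with hβdef
    have hβ0 : 0 < β := by
      rcases lt_or_eq_of_le (pos1_nonneg (b - a)) with h | h
      · exact h
      · exact absurd (sub_eq_zero.mp (pos1_eq_zero h.symm)) hb
    have hβ1 : β < 1 := pos1_lt_one _
    have hub : ((t + β : ℝ) : S1) = b := by
      rw [QuotientAddGroup.mk_add, hta, hβdef, coe_pos1]; abel
    intro he
    have := key β hβ0.le hβ1
    rw [hub, hta] at this
    rw [he, sub_self, pos1_zero] at this
    have h1 : F t < F (t + β) := hm (by linarith)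
    linarith
  · rw [mem_oArc_iff hac] at hb
    obtain ⟨h1, h2⟩ := hb
    set β := pos1 (b - a) with hβdef
    set ξ := pos1 (c - a) with hξdef
    have hξ1 : ξ < 1 := pos1_lt_one _
    have hub : ((t + β : ℝ) : S1) = b := by
      rw [QuotientAddGroup.mk_add, hta, hβdef, coe_pos1]; abel
    have hvc : ((t + ξ : ℝ) : S1) = c := by
      rw [QuotientAddGroup.mk_add, hta, hξdef, coe_pos1]; abel
    have e1 : pos1 (f b - f a) = F (t + β) - F t := by
      rw [← hub, ← hta]; exact key β h1.le (by linarith)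
    have e2 : pos1 (f c - f a) = F (t + ξ) - F t := by
      rw [← hvc, ← hta]; exact key ξ (by linarith) hξ1
    have hne : f a ≠ f c := by
      intro he
      rw [he, sub_self, pos1_zero] at e2
      have : F t < F (t + ξ) := hm (by linarith)
      linarith
    rw [mem_oArc_iff hne, e1, e2]
    constructor
    · have : F t < F (t + β) := hm (by linarith)
      linarith
    · have : F (t + β) < F (t + ξ) := hm (by linarith)
      linarith

/-- No point lies on both the arc from `u` to `v` and the arc from `v` to `u`. -/
lemma oArc_not_both {u v w : S1} (huv : u ≠ v) (h1 : w ∈ oArc u v) (h2 : w ∈ oArc v u) :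
    False := by
  rw [mem_oArc_iff huv] at h1
  rw [mem_oArc_iff (Ne.symm huv)] at h2
  set ν := pos1 (v - u) with hνdef
  set ω := pos1 (w - u) with hωdef
  have hν1 : ν < 1 := pos1_lt_one _
  have hω0 : 0 < ω := h1.1
  have hων : ω < ν := h1.2
  have e1 : pos1 (w - v) = ω - ν + 1 := by
    have hwv : ((ω - ν + 1 : ℝ) : S1) = w - v := by
      rw [show (ω - ν + 1 : ℝ) = ω - (ν - 1) by ring, coe_sub, coe_sub, hωdef, hνdef,
        coe_pos1, coe_pos1]
      have : (((1:ℝ)) : S1) = 0 := by simpa using coe_int 1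
      rw [this]; abel
    rw [← hwv, pos1_coe_of_mem (by linarith) (by linarith)]
  have e2 : pos1 (u - v) = 1 - ν := by
    have huv' : ((1 - ν : ℝ) : S1) = u - v := by
      rw [coe_sub, hνdef, coe_pos1]
      have : (((1:ℝ)) : S1) = 0 := by simpa using coe_int 1
      rw [this]; abel
    have hν0 : 0 < ν := lt_trans hω0 hων
    rw [← huv', pos1_coe_of_mem (by linarith) (by linarith)]
  have := h2.2
  rw [e1, e2] at this
  linarith

/-- Among three distinct points, the middle one lies on one of the two arcs. -/
lemma oArc_trichotomy {a b c : S1} (hab : a ≠ b) (hbc : b ≠ c) (hac : a ≠ c) :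
    b ∈ oArc a c ∨ b ∈ oArc c a := by
  set β := pos1 (b - a) with hβdef
  set ξ := pos1 (c - a) with hξdef
  have hβ0 : 0 < β := by
    rcases lt_or_eq_of_le (pos1_nonneg (b - a)) with h | h
    · exact h
    · exact absurd (sub_eq_zero.mp (pos1_eq_zero h.symm)).symm hab
  have hξ0 : 0 < ξ := by
    rcases lt_or_eq_of_le (pos1_nonneg (c - a)) with h | h
    · exact h
    · exact absurd (sub_eq_zero.mp (pos1_eq_zero h.symm)).symm hac
  have hβ1 : β < 1 := pos1_lt_one _
  have hξ1 : ξ < 1 := pos1_lt_one _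
  have hβξ : β ≠ ξ := by
    intro he
    exact hbc (by have := pos1_inj (hβdef ▸ hξdef ▸ he); simpa [sub_left_inj] using this)
  rcases lt_or_gt_of_ne hβξ with hlt | hgt
  · left; rw [mem_oArc_iff hac]; exact ⟨hβ0, hlt⟩
  · right
    rw [mem_oArc_iff (Ne.symm hac)]
    have e1 : pos1 (b - c) = β - ξ := by
      have : ((β - ξ : ℝ) : S1) = b - c := by
        rw [coe_sub, hβdef, hξdef, coe_pos1, coe_pos1]; abel
      rw [← this, pos1_coe_of_mem (by linarith) (by linarith)]
    have e2 : pos1 (a - c) = 1 - ξ := by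
      have : ((1 - ξ : ℝ) : S1) = a - c := by
        rw [coe_sub, hξdef, coe_pos1]
        have h1 : (((1:ℝ)) : S1) = 0 := by simpa using coe_int 1
        rw [h1]; abel
      rw [← this, pos1_coe_of_mem (by linarith) (by linarith)]
    rw [e1, e2]
    exact ⟨by linarith, by linarith⟩

/-- A continuous integer-valued function on `ℝ` vanishing at a point vanishes identically. -/
lemma int_constancy {D : ℝ → ℝ} (hc : Continuous D) (hint : ∀ x : ℝ, ∃ n : ℤ, D x = n)
    {t₀ : ℝ} (h0 : D t₀ = 0) : ∀ x : ℝ, D x = 0 := by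
  have hclopen : IsClopen (D ⁻¹' {0}) := by
    constructor
    · exact isClosed_singleton.preimage hc
    · rw [isOpen_iff_mem_nhds]
      intro y hy
      have hy0 : D y = 0 := hy
      have hU : D ⁻¹' (Set.Ioo (-(1/2)) (1/2)) ∈ nhds y := by
        apply hc.continuousAt.preimage_mem_nhds
        rw [hy0]
        exact Ioo_mem_nhds (by norm_num) (by norm_num)
      refine Filter.mem_of_superset hU ?_
      intro x hx
      obtain ⟨n, hn⟩ := hint x
      have hx1 : -(1/2 : ℝ) < n := by rw [← hn]; exact hx.1
      have hx2 : (n : ℝ) < 1/2 := by rw [← hn]; exact hx.2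
      have : n = 0 := by
        have hl : (-1 : ℤ) < n := by exact_mod_cast (by linarith : (-1:ℝ) < (n:ℝ))
        have hr : n < (1 : ℤ) := by exact_mod_cast (by linarith : ((n:ℝ)) < 1)
        omega
      show D x ∈ ({0} : Set ℝ)
      simp [hn, this]
  have := hclopen.eq_univ (Set.nonempty_of_mem (show t₀ ∈ D ⁻¹' {0} from h0))
  intro x
  have : x ∈ D ⁻¹' {0} := this ▸ Set.mem_univ x
  simpa using this

instance : LocallyConnectedSpace S1 := by
  rw [locallyConnectedSpace_iff_connected_subsets]
  intro x U hU
  induction x using QuotientAddGroup.induction_on with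
  | H t =>
    have h1 : (fun s : ℝ => ((s : ℝ) : S1)) ⁻¹' U ∈ nhds t :=
      (continuous_quotient_mk').continuousAt.preimage_mem_nhds hU
    obtain ⟨ε, hε, hball⟩ := Metric.mem_nhds_iff.mp h1
    have hopen : IsOpen ((fun s : ℝ => ((s : ℝ) : S1)) '' Metric.ball t ε) :=
      QuotientAddGroup.isOpenMap_coe _ Metric.isOpen_ball
    refine ⟨(fun s : ℝ => ((s : ℝ) : S1)) '' Metric.ball t ε, ?_, ?_, ?_⟩
    · exact hopen.mem_nhds ⟨t, Metric.mem_ball_self hε, rfl⟩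
    · exact ((convex_ball t ε).isPreconnected).image _ (continuous_quotient_mk').continuousOn
    · exact Set.image_subset_iff.mpr hball

end S11
end PAFlow

open PAFlow.S11

open PAFlow in
/-- a representation `ρ : Γ → Homeo(ℝ)` with `ρ(h)` the unit translation
induces a `(μ,τ,σ)`-representation of `Γ̄ = Γ/⟨h⟩` on `ℝ/ℤ`; every modification of the
induced representation on a periodic gap lifts to a representation of `Γ` on the line,
uniquely determined by agreeing with `ρ` on the preimage `μ̃` of `μ`. -/
theorem statement11 {Γ Γb : Type} [Group Γ] [Group Γb]
    (h : Γ) (hcentral : ∀ γ : Γ, γ * h = h * γ)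
    (π : Γ →* Γb) (hsurj : Function.Surjective π)
    (hker : π.ker = Subgroup.zpowers h)
    (P : OrbifoldPresentation Γb)
    (ρ : Γ →* (ℝ ≃ₜ ℝ)) (hρh : ∀ x : ℝ, ρ h x = x + 1)
    (μ : Set S1) (k : ℕ) (T : TauData μ k) (σg : Γb →* Equiv.Perm (Gap μ))
    (ρb : Γb →* (S1 ≃ₜ S1)) (hrep : IsMTSRep ρb μ k T σg)
    (hlift : ∀ (γ : Γ) (x : ℝ), ρb (π γ) ((x : ℝ) : S1) = ((ρ γ x : ℝ) : S1))
    (I₀ : Gap μ) (hper : gapStab σg I₀ ≠ ⊥)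
    (i : Fin P.q) (hstab : gapStab σg I₀ = Subgroup.zpowers (P.c i))
    (f₀ : S1 → S1) (hf₀ : IsClosureHomeo f₀ (I₀ : Set S1))
    (hbd : ∀ x ∈ frontier (I₀ : Set S1), f₀ x = ρb (P.c i) x)
    (ρb' : Γb →* (S1 ≃ₜ S1))
    (hmod : IsModification ρb ρb' μ k T σg I₀ (P.c i) f₀) :
    ∃! ρs : Γ →* (ℝ ≃ₜ ℝ),
      (∀ x : ℝ, ρs h x = x + 1) ∧
      (∀ (γ : Γ) (x : ℝ), ρb' (π γ) ((x : ℝ) : S1) = ((ρs γ x : ℝ) : S1)) ∧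
      (∀ (γ : Γ) (x : ℝ), ((x : ℝ) : S1) ∈ μ → ρs γ x = ρ γ x) := by
  classical
  -- basic facts on ρ
  have hρmul : ∀ (γ δ : Γ) (x : ℝ), ρ (γ * δ) x = ρ γ (ρ δ x) := by
    intro γ δ x; rw [map_mul]; rfl
  have hρone : ∀ x : ℝ, ρ (1 : Γ) x = x := by
    intro x; rw [map_one]; rfl
  have hcomm1 : ∀ (γ : Γ) (x : ℝ), ρ γ (x + 1) = ρ γ x + 1 := by
    intro γ x
    have h1 : ρ (γ * h) x = ρ (h * γ) x := by rw [hcentral]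
    rw [hρmul, hρmul, hρh] at h1
    rw [h1, hρh]
  have hmono : ∀ γ : Γ, StrictMono (⇑(ρ γ) : ℝ → ℝ) := by
    intro γ
    rcases Continuous.strictMono_of_inj (ρ γ).continuous (ρ γ).injective with hm | ha
    · exact hm
    · exfalso
      have h1 := ha (show (0:ℝ) < 1 by norm_num)
      have h2 : ρ γ ((0:ℝ) + 1) = ρ γ 0 + 1 := hcomm1 γ 0
      rw [zero_add] at h2
      rw [h2] at h1
      linarith
  -- the invariant open set J and the closed set M ⊂ ℝ
  set J : Set S1 := gapOrbit σg I₀ with hJdef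
  have hμc_open : IsOpen μᶜ := hrep.perfect.closed.isOpen_compl
  have hgap_sub : ∀ I : Gap μ, (I : Set S1) ⊆ μᶜ := by
    rintro ⟨I, x, hx, rfl⟩
    exact connectedComponentIn_subset _ _
  have hgap_open : ∀ I : Gap μ, IsOpen (I : Set S1) := by
    rintro ⟨I, x, hx, rfl⟩
    exact hμc_open.connectedComponentIn
  have hJopen : IsOpen J := isOpen_iUnion fun γb => hgap_open _
  have hμJ : ∀ s ∈ μ, s ∉ J := by
    intro s hs hsJ
    rw [hJdef, gapOrbit, Set.mem_iUnion] at hsJ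
    obtain ⟨γb, hγb⟩ := hsJ
    exact (hgap_sub _ hγb) hs
  set M : Set ℝ := {t : ℝ | ((t:ℝ) : S1) ∉ J} with hMdef
  have hMclosed : IsClosed M := by
    have he : M = (fun t : ℝ => ((t:ℝ) : S1)) ⁻¹' Jᶜ := rfl
    rw [he]
    exact hJopen.isClosed_compl.preimage continuous_quotient_mk'
  have hMint : ∀ (t : ℝ) (n : ℤ), t ∈ M → t + n ∈ M := by
    intro t n ht
    show ((t + n : ℝ) : S1) ∉ J
    rw [QuotientAddGroup.mk_add, coe_int, add_zero]
    exact ht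
  have hμM : ∀ t : ℝ, ((t:ℝ):S1) ∈ μ → t ∈ M := fun t ht => hμJ _ ht
  -- three distinct points of μ
  obtain ⟨s₁, hs₁⟩ := hrep.nonempty
  obtain ⟨s₂, hs₂, hs₂r⟩ : ∃ y, y ∈ μ ∧ y ≠ s₁ := by
    have := accPt_iff_nhds.mp (hrep.perfect.acc s₁ hs₁) Set.univ Filter.univ_mem
    obtain ⟨y, ⟨_, hy⟩, hyne⟩ := this
    exact ⟨y, hy, hyne⟩
  obtain ⟨s₃, hs₃, hs₃1, hs₃2⟩ : ∃ y, y ∈ μ ∧ y ≠ s₁ ∧ y ≠ s₂ := by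
    have hU : ({s₂}ᶜ : Set S1) ∈ nhds s₁ := by
      apply IsOpen.mem_nhds isOpen_compl_singleton
      simpa using (Ne.symm hs₂r)
    have := accPt_iff_nhds.mp (hrep.perfect.acc s₁ hs₁) _ hU
    obtain ⟨y, ⟨hyU, hyμ⟩, hyne⟩ := this
    exact ⟨y, hyμ, hyne, by simpa using hyU⟩
  set t₀ : ℝ := pos1 s₁ with ht₀def
  have ht₀ : ((t₀:ℝ):S1) = s₁ := coe_pos1 s₁
  have ht₀μ : ((t₀:ℝ):S1) ∈ μ := by rw [ht₀]; exact hs₁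
  have ht₀M : t₀ ∈ M := hμM _ ht₀μ
  -- sup/inf structure
  have hMlow : ∀ x : ℝ, (M ∩ Set.Iic x).Nonempty := by
    intro x
    refine ⟨t₀ + (⌊x - t₀⌋ : ℤ), hMint t₀ _ ht₀M, ?_⟩
    have := Int.floor_le (x - t₀); simp only [Set.mem_Iic]; linarith
  have hMhigh : ∀ x : ℝ, (M ∩ Set.Ici x).Nonempty := by
    intro x
    refine ⟨t₀ + (⌈x - t₀⌉ : ℤ), hMint t₀ _ ht₀M, ?_⟩
    have := Int.le_ceil (x - t₀); simp only [Set.mem_Ici]; linarith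
  have hbddA : ∀ x : ℝ, BddAbove (M ∩ Set.Iic x) := fun x => ⟨x, fun m hm => hm.2⟩
  have hbddB : ∀ x : ℝ, BddBelow (M ∩ Set.Ici x) := fun x => ⟨x, fun m hm => hm.2⟩
  set aP : ℝ → ℝ := fun x => sSup (M ∩ Set.Iic x) with haPdef
  set bP : ℝ → ℝ := fun x => sInf (M ∩ Set.Ici x) with hbPdef
  have haPmem : ∀ x, aP x ∈ M ∧ aP x ≤ x := by
    intro x
    have := (hMclosed.inter isClosed_Iic).csSup_mem (hMlow x) (hbddA x)
    exact ⟨this.1, this.2⟩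
  have hbPmem : ∀ x, bP x ∈ M ∧ x ≤ bP x := by
    intro x
    have := (hMclosed.inter isClosed_Ici).csInf_mem (hMhigh x) (hbddB x)
    exact ⟨this.1, this.2⟩
  have haPub : ∀ x, ∀ m ∈ M, m ≤ x → m ≤ aP x := fun x m hm hmx =>
    le_csSup (hbddA x) ⟨hm, hmx⟩
  have hbPlb : ∀ x, ∀ m ∈ M, x ≤ m → bP x ≤ m := fun x m hm hmx =>
    csInf_le (hbddB x) ⟨hm, hmx⟩
  have haPeq : ∀ x ∈ M, aP x = x := fun x hx =>
    le_antisymm (haPmem x).2 (haPub x x hx le_rfl)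
  have hgapM : ∀ x, ∀ m ∈ M, ¬(aP x < m ∧ m < bP x) := by
    rintro x m hm ⟨h1, h2⟩
    rcases le_or_gt m x with hmx | hxm
    · exact absurd (haPub x m hm hmx) (not_le.mpr h1)
    · exact absurd (hbPlb x m hm hxm.le) (not_le.mpr h2)
  have haPlt : ∀ x, x ∉ M → aP x < x := by
    intro x hx
    rcases lt_or_eq_of_le (haPmem x).2 with hlt | heq
    · exact hlt
    · exact absurd (heq ▸ (haPmem x).1) hx
  have hbPgt : ∀ x, x ∉ M → x < bP x := by
    intro x hx
    rcases lt_or_eq_of_le (hbPmem x).2 with hlt | heq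
    · exact hlt
    · exact absurd (heq ▸ (hbPmem x).1) hx
  -- the gap has length < 1
  have hblt : ∀ x : ℝ, x ∉ M → bP x < aP x + 1 := by
    intro x hxM
    by_contra hcon
    push_neg at hcon
    have key : ∀ s : S1, s ∈ μ → ∃ n : ℤ, pos1 s + (n:ℝ) = aP x + 1 := by
      intro s hs
      refine ⟨⌊aP x + 1 - pos1 s⌋, ?_⟩
      have hsM : pos1 s ∈ M := hμM _ (by rw [coe_pos1]; exact hs)
      have hmM : pos1 s + (⌊aP x + 1 - pos1 s⌋ : ℤ) ∈ M := hMint _ _ hsM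
      have hm1 : pos1 s + (⌊aP x + 1 - pos1 s⌋ : ℤ) ≤ aP x + 1 := by
        have := Int.floor_le (aP x + 1 - pos1 s); push_cast; linarith
      have hm2 : aP x < pos1 s + (⌊aP x + 1 - pos1 s⌋ : ℤ) := by
        have := Int.sub_one_lt_floor (aP x + 1 - pos1 s); push_cast; linarith
      rcases lt_or_eq_of_le hm1 with hlt | heq
      · exact absurd ⟨hm2, lt_of_lt_of_le hlt hcon⟩ (hgapM x _ hmM)
      · exact heq
    obtain ⟨n₁, hn₁⟩ := key s₁ hs₁
    obtain ⟨n₂, hn₂⟩ := key s₂ hs₂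
    have hdiff : pos1 s₁ - pos1 s₂ = (n₂ : ℝ) - n₁ := by linarith
    have hb1 := pos1_nonneg s₁; have hb2 := pos1_lt_one s₁
    have hb3 := pos1_nonneg s₂; have hb4 := pos1_lt_one s₂
    have hn12 : n₂ = n₁ := by
      have hl : (-1 : ℤ) < n₂ - n₁ := by exact_mod_cast (by push_cast; linarith : (-1:ℝ) < ((n₂ - n₁ : ℤ) : ℝ))
      have hr : (n₂ - n₁ : ℤ) < 1 := by exact_mod_cast (by push_cast; linarith : ((n₂ - n₁ : ℤ):ℝ) < 1)
      omega
    have : pos1 s₁ = pos1 s₂ := by rw [hn12] at hdiff; linarith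
    exact hs₂r (pos1_inj this).symm
  -- M is invariant
  have hρbmul : ∀ (γb δb : Γb) (s : S1), ρb (γb * δb) s = ρb γb (ρb δb s) := by
    intro γb δb s; rw [map_mul]; rfl
  have hMinv : ∀ (γ : Γ) (t : ℝ), t ∈ M → ρ γ t ∈ M := by
    intro γ t ht
    show ((ρ γ t : ℝ) : S1) ∉ J
    rw [← hlift]
    intro hmem
    rw [hJdef, gapOrbit, Set.mem_iUnion] at hmem
    obtain ⟨δb, hδb⟩ := hmem
    apply ht
    show ((t:ℝ):S1) ∈ J
    rw [hJdef, gapOrbit, Set.mem_iUnion]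
    refine ⟨(π γ)⁻¹ * δb, ?_⟩
    have hact := hrep.gapAct (π γ)⁻¹ (σg δb I₀)
    have hσ : σg ((π γ)⁻¹ * δb) I₀ = σg (π γ)⁻¹ (σg δb I₀) := by
      rw [map_mul]; rfl
    rw [hσ, hact]
    refine ⟨ρb (π γ) ((t:ℝ):S1), hδb, ?_⟩
    have e : ρb ((π γ)⁻¹ * (π γ)) ((t:ℝ):S1) = ((t:ℝ):S1) := by
      rw [inv_mul_cancel, map_one]; rfl
    rw [hρbmul] at e
    exact e
  -- orientation preservation
  have horp : ∀ γ : Γ, ∀ a b c : S1, b ∈ oArc a c →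
      ρb (π γ) b ∈ oArc (ρb (π γ) a) (ρb (π γ) c) := fun γ =>
    orientPres_core (hmono γ) (hcomm1 γ) (fun t => hlift γ t)
  have heqoff : ∀ (γb : Γb) (s : S1), s ∉ J → ρb' γb s = ρb γb s :=
    fun γb s hs => hmod.eq_off γb s hs
  have hμoff : ∀ (γb : Γb) (s : S1), s ∈ μ → ρb' γb s = ρb γb s :=
    fun γb s hs => heqoff γb s (hμJ s hs)
  have horp' : ∀ γ : Γ, ∀ a b c : S1, b ∈ oArc a c →
      ρb' (π γ) b ∈ oArc (ρb' (π γ) a) (ρb' (π γ) c) := by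
    intro γ
    rcases hmod.rep'.orient (π γ) with hP | hR
    · exact hP
    · exfalso
      have htri : ∃ a b c : S1, a ∈ μ ∧ b ∈ μ ∧ c ∈ μ ∧ a ≠ c ∧ b ∈ oArc a c := by
        rcases oArc_trichotomy (show s₁ ≠ s₂ from Ne.symm hs₂r)
          (show s₂ ≠ s₃ from Ne.symm hs₃2) (show s₁ ≠ s₃ from Ne.symm hs₃1) with hmem | hmem
        · exact ⟨s₁, s₂, s₃, hs₁, hs₂, hs₃, Ne.symm hs₃1, hmem⟩
        · exact ⟨s₃, s₂, s₁, hs₃, hs₂, hs₁, hs₃1, hmem⟩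
      obtain ⟨a, b, c, haμ, hbμ, hcμ, hac, hbarc⟩ := htri
      have h1 := horp γ a b c hbarc
      have h2 := hR a b c hbarc
      rw [hμoff _ _ haμ, hμoff _ _ hbμ, hμoff _ _ hcμ] at h2
      have hfne : ρb (π γ) a ≠ ρb (π γ) c := fun he => hac ((ρb (π γ)).injective he)
      exact oArc_not_both hfne h1 h2
  -- the lifted maps
  set L : Γ → ℝ → ℝ := fun γ x =>
    ρ γ (aP x) + pos1 (ρb' (π γ) ((x:ℝ):S1) - ((ρ γ (aP x) : ℝ):S1)) with hLdef
  have hLM : ∀ (γ : Γ) (x : ℝ), x ∈ M → L γ x = ρ γ x := by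
    intro γ x hx
    have hax : aP x = x := haPeq x hx
    simp only [hLdef]
    rw [hax, heqoff _ _ hx, hlift, sub_self, pos1_zero, add_zero]
  have hLlift : ∀ (γ : Γ) (x : ℝ), ((L γ x : ℝ) : S1) = ρb' (π γ) ((x:ℝ):S1) := by
    intro γ x
    simp only [hLdef]
    rw [QuotientAddGroup.mk_add, coe_pos1]
    abel
  -- key bounds on a gap
  have hkey : ∀ (γ : Γ) (x : ℝ), x ∉ M → ρ γ (aP x) < L γ x ∧ L γ x < ρ γ (bP x) := by
    intro γ x hx
    have ha := haPmem x; have hb := hbPmem x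
    have halt : aP x < x := haPlt x hx
    have hbgt : x < bP x := hbPgt x hx
    have hba : bP x < aP x + 1 := hblt x hx
    have hane : ((aP x : ℝ) : S1) ≠ ((bP x : ℝ) : S1) :=
      coe_ne_of_lt (lt_trans halt hbgt) hba
    have hxarc : ((x:ℝ):S1) ∈ oArc ((aP x : ℝ):S1) ((bP x:ℝ):S1) := by
      rw [mem_oArc_iff hane, pos1_sub_coe halt.le (by linarith),
        pos1_sub_coe (lt_trans halt hbgt).le hba]
      exact ⟨by linarith, by linarith⟩
    have hres := horp' γ _ _ _ hxarc
    rw [heqoff _ _ ha.1, heqoff _ _ hb.1, hlift, hlift] at hres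
    have hρbnd : ρ γ (bP x) < ρ γ (aP x) + 1 := by
      rw [← hcomm1 γ (aP x)]; exact hmono γ hba
    have hρne : ((ρ γ (aP x) : ℝ) : S1) ≠ ((ρ γ (bP x) : ℝ):S1) :=
      coe_ne_of_lt (hmono γ (lt_trans halt hbgt)) hρbnd
    rw [mem_oArc_iff hρne,
      pos1_sub_coe (hmono γ (lt_trans halt hbgt)).le hρbnd] at hres
    simp only [hLdef]
    exact ⟨by linarith [hres.1], by linarith [hres.2]⟩
  -- matching of components
  have hcomp : ∀ x₁ x₂ : ℝ, x₁ ∉ M → x₂ ∉ M → x₁ < x₂ → ¬ (bP x₁ ≤ aP x₂) →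
      aP x₁ = aP x₂ ∧ bP x₁ = bP x₂ := by
    intro x₁ x₂ h1 h2 hlt hno
    push_neg at hno
    constructor
    · apply le_antisymm
      · exact haPub x₂ _ (haPmem x₁).1 (le_trans (haPmem x₁).2 hlt.le)
      · by_contra hc
        push_neg at hc
        exact hgapM x₁ (aP x₂) (haPmem x₂).1 ⟨hc, hno⟩
    · have hd1 : bP x₁ ≤ bP x₂ :=
        hbPlb x₁ _ (hbPmem x₂).1 (by linarith [(hbPmem x₂).2])
      have hx₂b : x₂ ≤ bP x₁ := by
        by_contra hc; push_neg at hc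
        exact hgapM x₂ (bP x₁) (hbPmem x₁).1 ⟨hno, lt_of_lt_of_le hc (hbPmem x₂).2⟩
      have hd2 : bP x₂ ≤ bP x₁ := hbPlb x₂ _ (hbPmem x₁).1 hx₂b
      exact le_antisymm hd1 hd2
  -- strict monotonicity
  have hLmono : ∀ γ : Γ, StrictMono (L γ) := by
    intro γ x₁ x₂ hlt
    by_cases h1 : x₁ ∈ M <;> by_cases h2 : x₂ ∈ M
    · rw [hLM γ x₁ h1, hLM γ x₂ h2]; exact hmono γ hlt
    · rw [hLM γ x₁ h1]
      have hk := (hkey γ x₂ h2).1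
      have hle : x₁ ≤ aP x₂ := haPub x₂ x₁ h1 hlt.le
      calc ρ γ x₁ ≤ ρ γ (aP x₂) := (hmono γ).monotone hle
        _ < L γ x₂ := hk
    · rw [hLM γ x₂ h2]
      have hk := (hkey γ x₁ h1).2
      have hle : bP x₁ ≤ x₂ := hbPlb x₁ x₂ h2 hlt.le
      calc L γ x₁ < ρ γ (bP x₁) := hk
        _ ≤ ρ γ x₂ := (hmono γ).monotone hle
    · by_cases hsep : bP x₁ ≤ aP x₂
      · calc L γ x₁ < ρ γ (bP x₁) := (hkey γ x₁ h1).2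
          _ ≤ ρ γ (aP x₂) := (hmono γ).monotone hsep
          _ < L γ x₂ := (hkey γ x₂ h2).1
      · obtain ⟨hae, hbe⟩ := hcomp x₁ x₂ h1 h2 hlt hsep
        have halt1 : aP x₁ < x₁ := haPlt x₁ h1
        have hbgt2 : x₂ < bP x₂ := hbPgt x₂ h2
        have hba : bP x₁ < aP x₁ + 1 := hblt x₁ h1
        have hx₂a1 : x₂ < aP x₁ + 1 := by rw [hae] at hba ⊢; linarith [hbe ▸ hbgt2]
        have hane : ((aP x₁:ℝ):S1) ≠ ((x₂:ℝ):S1) :=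
          coe_ne_of_lt (by linarith) (by linarith)
        have harc : ((x₁:ℝ):S1) ∈ oArc ((aP x₁:ℝ):S1) ((x₂:ℝ):S1) := by
          rw [mem_oArc_iff hane, pos1_sub_coe (by linarith) (by linarith),
            pos1_sub_coe (by linarith) (by linarith)]
          exact ⟨by linarith, by linarith⟩
        have hres := horp' γ _ _ _ harc
        have hfne : ρb' (π γ) ((aP x₁:ℝ):S1) ≠ ρb' (π γ) ((x₂:ℝ):S1) :=
          fun he => hane ((ρb' (π γ)).injective he)
        rw [mem_oArc_iff hfne, heqoff _ _ (haPmem x₁).1, hlift] at hres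
        simp only [hLdef]
        rw [← hae]
        linarith [hres.2]
  -- identity and multiplicativity
  have hLone : ∀ x : ℝ, L (1:Γ) x = x := by
    intro x
    by_cases hx : x ∈ M
    · rw [hLM _ _ hx, hρone]
    · simp only [hLdef]
      rw [hρone, map_one, map_one]
      have he : ((1 : S1 ≃ₜ S1)) ((x:ℝ):S1) = ((x:ℝ):S1) := rfl
      rw [he, pos1_sub_coe (haPmem x).2]
      · ring
      · have := hbPgt x hx; have := hblt x hx; linarith
  have hLmul : ∀ (γ δ : Γ) (x : ℝ), L (γ * δ) x = L γ (L δ x) := by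
    intro γ δ x
    by_cases hx : x ∈ M
    · have hδx : ρ δ x ∈ M := hMinv δ x hx
      rw [hLM _ _ hx, hLM δ x hx, hLM γ _ hδx, hρmul]
    · have ha := haPmem x
      have hya : ρ δ (aP x) < L δ x := (hkey δ x hx).1
      have hyb : L δ x < ρ δ (bP x) := (hkey δ x hx).2
      have haM : ρ δ (aP x) ∈ M := hMinv δ _ ha.1
      have hnogap : ∀ m ∈ M, ¬ (ρ δ (aP x) < m ∧ m < ρ δ (bP x)) := by
        rintro m hm ⟨hm1, hm2⟩
        have hminv : ρ δ⁻¹ m ∈ M := hMinv δ⁻¹ m hm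
        have e1 : ρ δ⁻¹ (ρ δ (aP x)) = aP x := by rw [← hρmul, inv_mul_cancel, hρone]
        have e2 : ρ δ⁻¹ (ρ δ (bP x)) = bP x := by rw [← hρmul, inv_mul_cancel, hρone]
        apply hgapM x (ρ δ⁻¹ m) hminv
        constructor
        · have := hmono δ⁻¹ hm1; rw [e1] at this; exact this
        · have := hmono δ⁻¹ hm2; rw [e2] at this; exact this
      have haPy : aP (L δ x) = ρ δ (aP x) := by
        apply le_antisymm
        · apply csSup_le (hMlow (L δ x))
          rintro m ⟨hmM, hmy⟩
          by_contra hc; push_neg at hc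
          exact hnogap m hmM ⟨hc, lt_of_le_of_lt hmy hyb⟩
        · exact haPub (L δ x) _ haM hya.le
      have e4 : ((L δ x : ℝ):S1) = ρb' (π δ) ((x:ℝ):S1) := hLlift δ x
      have e5 : ρb' (π (γ * δ)) ((x:ℝ):S1) = ρb' (π γ) (ρb' (π δ) ((x:ℝ):S1)) := by
        rw [map_mul, map_mul]; rfl
      simp only [hLdef]
      rw [haPy, e4, ← e5, ← hρmul]
  -- bijectivity and the homeomorphism group homomorphism
  have hLbij : ∀ γ : Γ, Function.Bijective (L γ) := fun γ =>
    Function.bijective_iff_has_inverse.mpr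
      ⟨L γ⁻¹, fun x => by rw [← hLmul, inv_mul_cancel, hLone],
        fun x => by rw [← hLmul, mul_inv_cancel, hLone]⟩
  let Lh : Γ → (ℝ ≃ₜ ℝ) := fun γ =>
    (StrictMono.orderIsoOfSurjective (L γ) (hLmono γ) (hLbij γ).2).toHomeomorph
  have hLh : ∀ γ x, Lh γ x = L γ x := fun γ x => rfl
  let ρs : Γ →* (ℝ ≃ₜ ℝ) := MonoidHom.mk' Lh (fun γ δ => by
    apply Homeomorph.ext
    intro x
    have e1 : Lh (γ * δ) x = L (γ * δ) x := hLh _ x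
    have e2 : (Lh γ * Lh δ) x = L γ (L δ x) := by
      show Lh γ (Lh δ x) = L γ (L δ x)
      rw [hLh, hLh]
    rw [e1, e2, hLmul])
  have hρs : ∀ γ x, ρs γ x = L γ x := fun γ x => rfl
  have hπh : π h = 1 := by
    have hm : h ∈ π.ker := by rw [hker]; exact Subgroup.mem_zpowers h
    exact hm
  refine ⟨ρs, ⟨?_, ?_, ?_⟩, ?_⟩
  · -- ρs h = +1
    intro x
    rw [hρs]
    by_cases hx : x ∈ M
    · rw [hLM _ _ hx, hρh]
    · simp only [hLdef]
      rw [hρh, hπh, map_one]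
      have he : ((1 : S1 ≃ₜ S1)) ((x:ℝ):S1) = ((x:ℝ):S1) := rfl
      rw [he]
      have e2 : ((aP x + 1 : ℝ) : S1) = ((aP x:ℝ):S1) := by
        rw [QuotientAddGroup.mk_add]
        have h1 : (((1:ℝ)) : S1) = 0 := by simpa using coe_int 1
        rw [h1, add_zero]
      rw [e2, pos1_sub_coe (haPmem x).2]
      · ring
      · have := hbPgt x hx; have := hblt x hx; linarith
  · -- lifting property
    intro γ x
    rw [hρs]
    exact (hLlift γ x).symm
  · -- agreement on μ̃
    intro γ x hxμ
    rw [hρs]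
    rw [hLM γ x (hμM x hxμ)]
  · -- uniqueness
    rintro ρt ⟨d1, d2, d3⟩
    apply MonoidHom.ext
    intro γ
    apply Homeomorph.ext
    intro x
    have hcont : Continuous fun y : ℝ => (ρt γ) y - L γ y :=
      (ρt γ).continuous.sub (Lh γ).continuous
    have hint : ∀ y : ℝ, ∃ n : ℤ, (ρt γ) y - L γ y = n := by
      intro y
      have e1 : ((ρt γ y : ℝ) : S1) = ρb' (π γ) ((y:ℝ):S1) := (d2 γ y).symm
      have e2 : ((L γ y : ℝ) : S1) = ρb' (π γ) ((y:ℝ):S1) := hLlift γ y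
      have e3 : ((ρt γ y - L γ y : ℝ) : S1) = 0 := by rw [coe_sub, e1, e2, sub_self]
      rw [QuotientAddGroup.eq_zero_iff, AddSubgroup.mem_zmultiples_iff] at e3
      obtain ⟨n, hn⟩ := e3
      exact ⟨n, by rw [← hn]; simp⟩
    have h00 : (ρt γ) t₀ - L γ t₀ = 0 := by
      rw [d3 γ t₀ ht₀μ, hLM γ t₀ ht₀M, sub_self]
    have hz := int_constancy hcont hint h00 x
    have : (ρt γ) x = L γ x := by linarith
    rw [this, hρs]
end
end

section
/- Let Γ̄ be an orbifold group with q = 1 (and g ≥ 1, or g = 0 and p ≥ 2), and write c₁ = s_ℓ⋯s₁ where s_ℓ⋯s₁ is the word w₀ of length ℓ with letters in the generating set 𝔖. Let ρ̄: Γ̄ → Homeo(S¹) be a (μ,τ,σ)-representation and let I₀ be a periodic gap of μ whose stabilizer {γ̄ ∈ Γ̄ : σ(γ̄)I₀ = I₀} is the cyclic subgroup generated by c₁. Define inductively I_i = σ(s_i)(I_{i−1}) for 1 ≤ i ≤ ℓ−1. Then the gaps I₀, I₁, …, I_{ℓ−1} are pairwise distinct. -/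
open Set Filter Topology
open scoped commutatorElement

noncomputable section

noncomputable section

/-- The affine group of ℂ: pairs (a, b) acting as z ↦ a z + b. -/
structure Aff : Type where
  a : ℂˣ
  b : ℂ

namespace Aff

instance : Mul Aff := ⟨fun x y => ⟨x.a * y.a, (x.a : ℂ) * y.b + x.b⟩⟩
instance : One Aff := ⟨⟨1, 0⟩⟩
instance : Inv Aff := ⟨fun x => ⟨x.a⁻¹, -((x.a⁻¹ : ℂˣ) : ℂ) * x.b⟩⟩

@[simp] lemma mul_a (x y : Aff) : (x * y).a = x.a * y.a := rfl
@[simp] lemma mul_b (x y : Aff) : (x * y).b = (x.a : ℂ) * y.b + x.b := rfl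
@[simp] lemma one_a : (1 : Aff).a = 1 := rfl
@[simp] lemma one_b : (1 : Aff).b = 0 := rfl
@[simp] lemma inv_a (x : Aff) : (x⁻¹).a = x.a⁻¹ := rfl
@[simp] lemma inv_b (x : Aff) : (x⁻¹).b = -((x.a⁻¹ : ℂˣ) : ℂ) * x.b := rfl

@[ext] lemma ext {x y : Aff} (h1 : x.a = y.a) (h2 : x.b = y.b) : x = y := by
  cases x; cases y; simp_all

instance : Group Aff where
  mul_assoc x y z := by
    ext <;> simp [mul_assoc, mul_add] <;> ring
  one_mul x := by ext <;> simp
  mul_one x := by ext <;> simp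
  inv_mul_cancel x := by
    ext <;> simp

lemma mk_mul (a c : ℂˣ) (b d : ℂ) :
    (⟨a, b⟩ : Aff) * ⟨c, d⟩ = ⟨a * c, (a : ℂ) * d + b⟩ := rfl

@[simp] lemma mk_inj (a c : ℂˣ) (b d : ℂ) :
    ((⟨a, b⟩ : Aff) = ⟨c, d⟩) ↔ (a = c ∧ b = d) := by
  constructor
  · intro h; injection h with h1 h2; exact ⟨h1, h2⟩
  · rintro ⟨rfl, rfl⟩; rfl

/-- powers of a scaling -/
lemma scale_pow (u : ℂˣ) (n : ℕ) : (⟨u, 0⟩ : Aff) ^ n = ⟨u ^ n, 0⟩ := by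
  induction n with
  | zero => rfl
  | succ n ih => rw [pow_succ, pow_succ, ih, mk_mul]; simp

lemma scale_zpow (u : ℂˣ) (m : ℤ) : (⟨u, 0⟩ : Aff) ^ m = ⟨u ^ m, 0⟩ := by
  cases m with
  | ofNat n => simpa using scale_pow u n
  | negSucc n =>
      rw [zpow_negSucc, zpow_negSucc, scale_pow]
      ext <;> simp

/-- powers of a rotation about the point 1 -/
lemma rot1_pow (u : ℂˣ) (n : ℕ) :
    (⟨u, 1 - (u : ℂ)⟩ : Aff) ^ n = ⟨u ^ n, 1 - ((u ^ n : ℂˣ) : ℂ)⟩ := by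
  induction n with
  | zero => simp; rfl
  | succ n ih =>
      rw [pow_succ, ih, mk_mul]
      ext
      · simp [pow_succ]
      · simp only [mk_mul, pow_succ, Units.val_mul, mul_sub, mul_one]
        ring

lemma rot1_inv (u : ℂˣ) :
    (⟨u, 1 - (u : ℂ)⟩ : Aff)⁻¹ = ⟨u⁻¹, 1 - ((u⁻¹ : ℂˣ) : ℂ)⟩ := by
  ext
  · simp
  · simp [mul_sub]
    ring

/-- powers of a translation -/
lemma trans_pow (c : ℂ) (n : ℕ) : (⟨1, c⟩ : Aff) ^ n = ⟨1, (n : ℂ) * c⟩ := by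
  induction n with
  | zero => simp; rfl
  | succ n ih => rw [pow_succ, ih, mk_mul]; ext <;> simp <;> ring

lemma trans_zpow (c : ℂ) (m : ℤ) : (⟨1, c⟩ : Aff) ^ m = ⟨1, (m : ℂ) * c⟩ := by
  cases m with
  | ofNat n => rw [Int.ofNat_eq_coe, zpow_natCast, trans_pow]; norm_num
  | negSucc n =>
      rw [zpow_negSucc, trans_pow]
      ext
      · simp
      · simp
        push_cast
        ring

end Aff

namespace Aff

lemma rot_core (ζ ξ : ℂˣ) (hζ : (ζ : ℂ) ≠ 1) (hξ : (ξ : ℂ) ≠ 1) (m : ℤ) :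
    (⟨ξ, 1 - (ξ : ℂ)⟩ : Aff)⁻¹ ≠ ((⟨ζ, 0⟩ : Aff) * ⟨ξ, 1 - (ξ : ℂ)⟩) ^ m := by
  intro hEq
  rw [rot1_inv] at hEq
  have hR : (⟨ζ, 0⟩ : Aff) * ⟨ξ, 1 - (ξ : ℂ)⟩ = ⟨ζ * ξ, (ζ : ℂ) * (1 - (ξ : ℂ))⟩ := by
    rw [mk_mul]; simp
  rw [hR] at hEq
  set a : ℂˣ := ζ * ξ with ha
  set b : ℂ := (ζ : ℂ) * (1 - (ξ : ℂ)) with hb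
  have hξinv : ((ξ⁻¹ : ℂˣ) : ℂ) ≠ 1 := by
    simp only [Units.val_inv_eq_inv_val]
    intro h
    apply hξ
    have := congrArg (fun z => (ξ : ℂ) * z) h
    simpa [mul_inv_cancel₀ (ξ.ne_zero)] using this.symm
  by_cases hA : (a : ℂ) = 1
  · have hA' : a = 1 := Units.ext hA
    rw [hA', trans_zpow] at hEq
    rw [mk_inj] at hEq
    exact hξinv (by rw [hEq.1]; rfl)
  · -- conjugate to a scaling
    set z₀ : ℂ := b / (1 - (a : ℂ)) with hz₀
    have h1a : (1 : ℂ) - (a : ℂ) ≠ 0 := fun h => hA (by linear_combination -h)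
    have hzb : z₀ * (1 - (a : ℂ)) = b := by rw [hz₀]; exact div_mul_cancel₀ b h1a
    have hconj : (⟨a, b⟩ : Aff) = (⟨1, z₀⟩ : Aff) * ⟨a, 0⟩ * (⟨1, z₀⟩ : Aff)⁻¹ := by
      ext
      · simp
      · simp
        linear_combination -hzb
    rw [hconj, conj_zpow, scale_zpow] at hEq
    have hpow : (⟨1, z₀⟩ : Aff) * (⟨a ^ m, 0⟩ : Aff) * (⟨1, z₀⟩ : Aff)⁻¹ =
        ⟨a ^ m, z₀ * (1 - ((a ^ m : ℂˣ) : ℂ))⟩ := by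
      ext
      · simp
      · simp
        ring
    rw [hpow, mk_inj] at hEq
    obtain ⟨h1, h2⟩ := hEq
    rw [← h1] at h2
    have hc : (1 : ℂ) - ((ξ⁻¹ : ℂˣ) : ℂ) ≠ 0 := fun h => hξinv (by linear_combination -h)
    have hfac : (z₀ - 1) * ((1 : ℂ) - ((ξ⁻¹ : ℂˣ) : ℂ)) = 0 := by linear_combination -h2
    have hz1 : z₀ = 1 := by
      rcases mul_eq_zero.1 hfac with h | h
      · linear_combination h
      · exact absurd h hc
    apply hζ
    have : b = 1 - (a : ℂ) := by rw [← hzb, hz1, one_mul]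
    rw [hb, ha] at this
    simp only [Units.val_mul] at this
    linear_combination this - (ξ : ℂ) * (by rfl : (1:ℂ) = 1)

end Aff

section ListHelpers

variable {M : Type*} [Monoid M] {X : Type*}

lemma prod_ofFn_one {n : ℕ} (f : Fin n → M) (h : ∀ i, f i = 1) :
    (List.ofFn f).prod = 1 := by
  apply List.prod_eq_one
  intro x hx
  rw [List.mem_ofFn] at hx
  obtain ⟨i, rfl⟩ := hx
  exact h i

lemma prod_ofFn_single : ∀ (n : ℕ) (f : Fin n → M) (r : ℕ) (hr : r < n),
    (∀ i : Fin n, (i : ℕ) ≠ r → f i = 1) → (List.ofFn f).prod = f ⟨r, hr⟩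
  | 0, f, r, hr, _ => absurd hr (Nat.not_lt_zero r)
  | n + 1, f, r, hr, h => by
      rw [List.ofFn_succ, List.prod_cons]
      cases r with
      | zero =>
          have : (List.ofFn fun i : Fin n => f i.succ).prod = 1 := by
            apply prod_ofFn_one
            intro i
            exact h i.succ (by simp)
          rw [this, mul_one]
          exact congrArg f (Fin.ext (by simp))
      | succ r' =>
          have h0 : f 0 = 1 := h 0 (by simp)
          have := prod_ofFn_single n (fun i : Fin n => f i.succ) r' (by omega)
            (fun i hi => h i.succ (by simpa using fun hc => hi (by omega)))
          rw [h0, one_mul, this]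
          exact congrArg f (Fin.ext (by simp))

lemma prod_ofFn_two (n : ℕ) (f : Fin n → M) (r : ℕ) (h0r : 0 < r) (hr : r < n)
    (h : ∀ i : Fin n, (i : ℕ) ≠ 0 → (i : ℕ) ≠ r → f i = 1) :
    (List.ofFn f).prod = f ⟨0, by omega⟩ * f ⟨r, hr⟩ := by
  cases n with
  | zero => omega
  | succ n =>
      rw [List.ofFn_succ, List.prod_cons]
      have := prod_ofFn_single n (fun i : Fin n => f i.succ) (r - 1) (by omega)
        (fun i hi => h i.succ (by simp) (by simpa using fun hc => hi (by omega)))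
      rw [this]
      have e1 : f 0 = f ⟨0, by omega⟩ := congrArg f (Fin.ext (by simp))
      have e2 : (fun i : Fin n => f i.succ) ⟨r - 1, by omega⟩ = f ⟨r, hr⟩ := by
        show f _ = f _
        exact congrArg f (Fin.ext (by simp; omega))
      rw [e1]; exact congrArg _ e2

lemma flatten_ofFn_getElem? (c : ℕ) : ∀ (g : ℕ) (f : Fin g → List X),
    (∀ i, (f i).length = c) → ∀ (s e : ℕ), e < c → ∀ (hs : s < g),
    ((List.ofFn f).flatten)[c * s + e]? = (f ⟨s, hs⟩)[e]?
  | 0, f, hf, s, e, he, hs => absurd hs (Nat.not_lt_zero s)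
  | g + 1, f, hf, s, e, he, hs => by
      rw [List.ofFn_succ, List.flatten_cons]
      cases s with
      | zero =>
          rw [List.getElem?_append_left (by rw [hf]; omega)]
          have e0 : (0 : Fin (g+1)) = ⟨0, hs⟩ := Fin.ext (by simp)
          rw [← e0]
          norm_num
      | succ s' =>
          rw [List.getElem?_append_right (by rw [hf]; nlinarith)]
          have : c * (s' + 1) + e - (f 0).length = c * s' + e := by rw [hf]; ring_nf; omega
          rw [this, flatten_ofFn_getElem? c g (fun i => f i.succ) (fun i => hf i.succ) s' e he (by omega)]
          exact congrArg (fun l : List X => l[e]?) (congrArg f (Fin.ext (by simp)))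

lemma flatten_ofFn_length (c g : ℕ) (f : Fin g → List X) (hf : ∀ i, (f i).length = c) :
    (List.ofFn f).flatten.length = g * c := by
  rw [List.length_flatten, List.map_ofFn]
  have : (List.ofFn (List.length ∘ f)) = List.replicate g c := by
    rw [← List.ofFn_const]
    congr 1
    funext i
    exact hf i
  rw [this, List.sum_replicate, smul_eq_mul]

end ListHelpers
section S14
open PAFlow

variable {Γ : Type} [Group Γ]

/-- The evaluated letters of `w₀`, reversed (so that index `n` is the `n+1`-st letter
from the right of `w₀`). -/
def LL (P : OrbifoldPresentation Γ) : List Γ := ((w0 P).map (evLetter P)).reverse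

/-- Suffix products of `w₀`. -/
def uu (P : OrbifoldPresentation Γ) : ℕ → Γ
  | 0 => 1
  | n + 1 => (LL P).getD n 1 * uu P n

/-- The free part of the word `w₀`. -/
def wFree {Γ : Type} [Group Γ] (P : OrbifoldPresentation Γ) : List (OLetter P.g P.p) :=
  if P.orientable then
    (List.ofFn fun i : Fin P.g =>
      ([OLetter.ga i false, OLetter.gb i false, OLetter.ga i true, OLetter.gb i true] :
        List (OLetter P.g P.p))).flatten
   else
    (List.ofFn fun i : Fin P.g =>
      ([OLetter.ga i false, OLetter.ga i false] : List (OLetter P.g P.p))).flatten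

variable (P : OrbifoldPresentation Γ)

lemma w0_eq : w0 P = wFree P ++ (List.ofFn fun j : Fin P.p => OLetter.gd j false) := rfl

lemma w0Len_or (hor : P.orientable = true) : w0Len P = 4 * P.g + P.p := by
  unfold w0Len; rw [if_pos hor]

lemma w0Len_non (hor : P.orientable = false) : w0Len P = 2 * P.g + P.p := by
  unfold w0Len; rw [if_neg (by simp [hor])]

lemma p_le_w0Len : P.p ≤ w0Len P := by
  unfold w0Len; split <;> omega

lemma wFree_length : (wFree P).length = w0Len P - P.p := by
  unfold wFree w0Len
  by_cases hor : P.orientable = true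
  · rw [if_pos hor, if_pos hor,
      flatten_ofFn_length 4 P.g (fun i : Fin P.g =>
        ([OLetter.ga i false, OLetter.gb i false, OLetter.ga i true, OLetter.gb i true] :
          List (OLetter P.g P.p))) (fun i => rfl)]
    omega
  · rw [if_neg hor, if_neg hor,
      flatten_ofFn_length 2 P.g (fun i : Fin P.g =>
        ([OLetter.ga i false, OLetter.ga i false] : List (OLetter P.g P.p))) (fun i => rfl)]
    omega

lemma w0_length : (w0 P).length = w0Len P := by
  rw [w0_eq, List.length_append, List.length_ofFn, wFree_length]
  have := p_le_w0Len P
  omega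

lemma LL_length : (LL P).length = w0Len P := by
  simp [LL, w0_length]

lemma LL_getElem? (n : ℕ) (hn : n < w0Len P) :
    (LL P)[n]? = (Option.map (evLetter P) ((w0 P)[w0Len P - 1 - n]?)) := by
  unfold LL
  rw [List.getElem?_reverse (by simp [w0_length]; omega), List.getElem?_map]
  congr 2
  simp [w0_length]

lemma letter_d (n : ℕ) (hn : n < P.p) :
    (LL P).getD n 1 = P.d ⟨P.p - 1 - n, by omega⟩ := by
  have hp := p_le_w0Len P
  rw [List.getD_eq_getElem?_getD, LL_getElem? P n (by omega), w0_eq,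
    List.getElem?_append_right (by rw [wFree_length]; omega)]
  have hidx : w0Len P - 1 - n - (wFree P).length = P.p - 1 - n := by
    rw [wFree_length]; omega
  rw [hidx, List.getElem?_ofFn]
  have hlt : P.p - 1 - n < P.p := by omega
  simp only [List.ofFnNthVal, dif_pos hlt, Option.map_some, Option.getD_some]
  rfl

lemma letter_free_or (hor : P.orientable = true) (n : ℕ) (h1 : P.p ≤ n)
    (h2 : n < w0Len P) :
    (LL P).getD n 1 =
      (if (n - P.p) % 4 = 0 then
        (P.b ⟨P.g - 1 - (n - P.p) / 4, by rw [w0Len_or P hor] at h2; omega⟩)⁻¹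
       else if (n - P.p) % 4 = 1 then
        (P.a ⟨P.g - 1 - (n - P.p) / 4, by rw [w0Len_or P hor] at h2; omega⟩)⁻¹
       else if (n - P.p) % 4 = 2 then
        P.b ⟨P.g - 1 - (n - P.p) / 4, by rw [w0Len_or P hor] at h2; omega⟩
       else
        P.a ⟨P.g - 1 - (n - P.p) / 4, by rw [w0Len_or P hor] at h2; omega⟩) := by
  have hl := w0Len_or P hor
  have hdm := Nat.div_add_mod (n - P.p) 4
  have hm4 : (n - P.p) % 4 < 4 := Nat.mod_lt _ (by omega)
  rw [List.getD_eq_getElem?_getD, LL_getElem? P n (by omega), w0_eq,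
    List.getElem?_append_left (by rw [wFree_length]; omega)]
  unfold wFree
  rw [if_pos hor]
  have hk : w0Len P - 1 - n = 4 * (P.g - 1 - (n - P.p) / 4) + (3 - (n - P.p) % 4) := by
    omega
  have hfl := flatten_ofFn_getElem? 4 P.g (fun i : Fin P.g =>
      ([OLetter.ga i false, OLetter.gb i false, OLetter.ga i true, OLetter.gb i true] :
        List (OLetter P.g P.p))) (fun i => rfl)
      (P.g - 1 - (n - P.p) / 4) (3 - (n - P.p) % 4) (by omega) (by omega)
  rw [hk, hfl]
  have : (n - P.p) % 4 = 0 ∨ (n - P.p) % 4 = 1 ∨ (n - P.p) % 4 = 2 ∨ (n - P.p) % 4 = 3 := by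
    omega
  rcases this with h | h | h | h <;> simp only [h] <;> simp [evLetter]

lemma letter_free_non (hor : P.orientable = false) (n : ℕ) (h1 : P.p ≤ n)
    (h2 : n < w0Len P) :
    (LL P).getD n 1 =
      P.a ⟨P.g - 1 - (n - P.p) / 2, by rw [w0Len_non P hor] at h2; omega⟩ := by
  have hl := w0Len_non P hor
  have hdm := Nat.div_add_mod (n - P.p) 2
  have hm2 : (n - P.p) % 2 < 2 := Nat.mod_lt _ (by omega)
  rw [List.getD_eq_getElem?_getD, LL_getElem? P n (by omega), w0_eq,
    List.getElem?_append_left (by rw [wFree_length]; omega)]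
  unfold wFree
  rw [if_neg (by simp [hor])]
  have hk : w0Len P - 1 - n = 2 * (P.g - 1 - (n - P.p) / 2) + (1 - (n - P.p) % 2) := by
    omega
  have hfl := flatten_ofFn_getElem? 2 P.g (fun i : Fin P.g =>
      ([OLetter.ga i false, OLetter.ga i false] : List (OLetter P.g P.p))) (fun i => rfl)
      (P.g - 1 - (n - P.p) / 2) (1 - (n - P.p) % 2) (by omega) (by omega)
  rw [hk, hfl]
  have : (n - P.p) % 2 = 0 ∨ (n - P.p) % 2 = 1 := by omega
  rcases this with h | h <;> simp only [h] <;> simp [evLetter]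

lemma u_eval {H : Type*} [Group H] (φ : Γ →* H) (F : ℕ → H) (hF0 : F 0 = 1)
    (bound : ℕ) (hstep : ∀ n < bound, φ ((LL P).getD n 1) * F n = F (n + 1)) :
    ∀ n, n ≤ bound → φ (uu P n) = F n := by
  intro n
  induction n with
  | zero => intro _; rw [hF0]; exact map_one φ
  | succ n ih =>
      intro h
      show φ ((LL P).getD n 1 * uu P n) = F (n + 1)
      rw [map_mul, ih (by omega), hstep n (by omega)]

lemma gapSeq_u {μ : Set S1} (σg : Γ →* Equiv.Perm (Gap μ)) (I₀ : Gap μ) :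
    ∀ n, gapSeq σg I₀ (LL P) n = σg (uu P n) I₀
  | 0 => by
      show I₀ = σg (1 : Γ) I₀
      simp
  | n + 1 => by
      show σg ((LL P).getD n 1) (gapSeq σg I₀ (LL P) n) = σg ((LL P).getD n 1 * uu P n) I₀
      rw [gapSeq_u σg I₀ n, map_mul, Equiv.Perm.mul_apply]

/-- Constructing homomorphisms to `Aff` from the universal property. -/
lemma lift_exists (fa fb : Fin P.g → Aff) (fd : Fin P.p → Aff)
    (hq : P.q = 1)
    (hb : P.orientable = false → ∀ i, fb i = 1)
    (hd : ∀ j, fd j ^ (P.α j) = 1) (Vc : Aff)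
    (hV : (if P.orientable then (List.ofFn fun i => ⁅fa i, fb i⁆).prod
        else (List.ofFn fun i => (fa i) ^ 2).prod) * (List.ofFn fd).prod = Vc) :
    ∃ φ : Γ →* Aff, (∀ i, φ (P.a i) = fa i) ∧ (∀ i, φ (P.b i) = fb i) ∧
      (∀ j, φ (P.d j) = fd j) ∧ φ (P.c ⟨0, P.q_pos⟩) = Vc := by
  have hrel : (List.ofFn (fun _ : Fin P.q => Vc)).prod =
      (if P.orientable then (List.ofFn fun i => ⁅fa i, fb i⁆).prod
        else (List.ofFn fun i => (fa i) ^ 2).prod) * (List.ofFn fd).prod := by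
    rw [List.ofFn_const, List.prod_replicate, hV, hq, pow_one]
  obtain ⟨φ, ⟨ha', hb', hd', hc'⟩, -⟩ :=
    P.liftUnique Aff inferInstance fa fb fd (fun _ => Vc) hb hd hrel
  exact ⟨φ, ha', hb', hd', hc' _⟩

end S14
section S15
open PAFlow

noncomputable def uI : ℂˣ := Units.mk0 Complex.I Complex.I_ne_zero

noncomputable def Aor : Aff := ⟨uI, 0⟩
noncomputable def Bor : Aff := ⟨1, 1⟩

noncomputable def Vor : ℕ → Aff := fun e =>
  if e = 0 then 1 else if e = 1 then Bor⁻¹ else if e = 2 then Aor⁻¹ * Bor⁻¹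
  else if e = 3 then Bor * (Aor⁻¹ * Bor⁻¹) else Aor * (Bor * (Aor⁻¹ * Bor⁻¹))

noncomputable def Zor : Aff := ⁅Aor, Bor⁆

@[simp] lemma uI_val : (uI : ℂ) = Complex.I := rfl
@[simp] lemma uI_inv_val : ((uI⁻¹ : ℂˣ) : ℂ) = -Complex.I := by
  rw [Units.val_inv_eq_inv_val, uI_val, Complex.inv_I]

lemma Vor0 : Vor 0 = 1 := rfl
lemma Vor0' : Vor 0 = ⟨1, 0⟩ := rfl
lemma Vor1 : Vor 1 = ⟨1, -1⟩ := by
  show Bor⁻¹ = _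
  unfold Bor
  ext <;> simp

lemma Vor2 : Vor 2 = ⟨uI⁻¹, Complex.I⟩ := by
  show Aor⁻¹ * Bor⁻¹ = _
  unfold Aor Bor
  ext <;> simp

lemma Vor3 : Vor 3 = ⟨uI⁻¹, 1 + Complex.I⟩ := by
  show Bor * (Aor⁻¹ * Bor⁻¹) = _
  unfold Aor Bor
  ext
  · simp
  · simp
    ring

lemma Vor4 : Vor 4 = ⟨1, Complex.I - 1⟩ := by
  show Aor * (Bor * (Aor⁻¹ * Bor⁻¹)) = _
  unfold Aor Bor
  ext
  · simp
  · simp [Complex.ext_iff]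

lemma Zor_eq : Zor = ⟨1, Complex.I - 1⟩ := by
  rw [← Vor4]
  show ⁅Aor, Bor⁆ = Aor * (Bor * (Aor⁻¹ * Bor⁻¹))
  rw [commutatorElement_def, mul_assoc, mul_assoc]

lemma Zor_zpow (m : ℤ) : Zor ^ m = ⟨1, (m : ℂ) * (Complex.I - 1)⟩ := by
  rw [Zor_eq, Aff.trans_zpow]

lemma Vor_vals : ∀ e ≤ 4, Vor e = ⟨1, 0⟩ ∨ Vor e = ⟨1, -1⟩ ∨ Vor e = ⟨uI⁻¹, Complex.I⟩ ∨
    Vor e = ⟨uI⁻¹, 1 + Complex.I⟩ ∨ Vor e = ⟨1, Complex.I - 1⟩ := by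
  intro e he
  interval_cases e
  · exact Or.inl Vor0'
  · exact Or.inr (Or.inl Vor1)
  · exact Or.inr (Or.inr (Or.inl Vor2))
  · exact Or.inr (Or.inr (Or.inr (Or.inl Vor3)))
  · exact Or.inr (Or.inr (Or.inr (Or.inr Vor4)))

lemma uI_inv_ne_one : (uI⁻¹ : ℂˣ) ≠ 1 := by
  intro h
  have := congrArg (fun u : ℂˣ => (u : ℂ)) h
  simp [Complex.ext_iff] at this

/-- On statuses `≤ 3` (block not entirely contained), the coset equation forces `m = 0`. -/
lemma coset0_or (e e' : ℕ) (he : e ≤ 3) (he' : e' ≤ 3) (m : ℤ)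
    (h : Vor e = Vor e' * Zor ^ m) : m = 0 := by
  rw [Zor_zpow] at h
  interval_cases e <;> interval_cases e' <;>
    simp only [Vor0', Vor1, Vor2, Vor3, Aff.mk_mul, Aff.mk_inj, mul_one, one_mul] at h <;>
    [skip; skip; skip; skip; skip; skip; skip; skip; skip; skip; skip; skip; skip; skip;
      skip; skip] <;>
  · obtain ⟨h1, h2⟩ := h
    first
      | exact absurd h1 uI_inv_ne_one
      | exact absurd h1.symm uI_inv_ne_one
      | (have hre := congrArg Complex.re h2
         have him := congrArg Complex.im h2
         simp [Complex.ext_iff] at hre him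
         try push_cast at hre him
         first
           | omega
           | (exfalso; omega)
           | exact_mod_cast him
           | exact_mod_cast hre
           | (exfalso; exact absurd hre (by positivity))
           | nlinarith [hre, him]
           | (have : (m : ℝ) = 0 := by nlinarith [hre, him]
              exact_mod_cast this))

lemma Vor_inj (e e' : ℕ) (he : e ≤ 4) (he' : e' ≤ 4) (h : Vor e = Vor e') : e = e' := by
  interval_cases e <;> interval_cases e' <;>
    simp only [Vor0', Vor1, Vor2, Vor3, Vor4, Aff.mk_inj] at h <;>
    first
      | rfl
      | (exfalso
         obtain ⟨h1, h2⟩ := h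
         first
           | exact absurd h1 uI_inv_ne_one
           | exact absurd h1.symm uI_inv_ne_one
           | (have hre := congrArg Complex.re h2
              have him := congrArg Complex.im h2
              simp [Complex.ext_iff] at hre him
              try norm_num at hre him))

end S15
section S16
open PAFlow

noncomputable def Anon : Aff := ⟨1, 1⟩

noncomputable def Vnon : ℕ → Aff := fun e =>
  if e = 0 then 1 else if e = 1 then Anon else Anon * Anon

noncomputable def Znon : Aff := Anon ^ 2

lemma Vnon0 : Vnon 0 = ⟨1, 0⟩ := rfl
lemma Vnon1 : Vnon 1 = ⟨1, 1⟩ := rfl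
lemma Vnon2 : Vnon 2 = ⟨1, 2⟩ := by
  show Anon * Anon = _
  unfold Anon
  ext <;> simp <;> norm_num

lemma Znon_eq : Znon = ⟨1, 2⟩ := by
  show Anon ^ 2 = _
  rw [sq]
  exact Vnon2

lemma Znon_zpow (m : ℤ) : Znon ^ m = ⟨1, (m : ℂ) * 2⟩ := by
  rw [Znon_eq, Aff.trans_zpow]

lemma coset0_non (e e' : ℕ) (he : e ≤ 1) (he' : e' ≤ 1) (m : ℤ)
    (h : Vnon e = Vnon e' * Znon ^ m) : m = 0 := by
  rw [Znon_zpow] at h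
  interval_cases e <;> interval_cases e' <;>
    simp only [Vnon0, Vnon1, Aff.mk_mul, Aff.mk_inj, Units.val_one, mul_one, one_mul] at h <;>
  · obtain ⟨-, h2⟩ := h
    have h3 : (0 : ℂ) = 2 * m ∨ (0:ℂ) = 2 * m + 1 ∨ (1:ℂ) = 2 * m ∨ (1:ℂ) = 2*m+1 := by
      first
        | (left; linear_combination h2)
        | (right; left; linear_combination h2)
        | (right; right; left; linear_combination h2)
        | (right; right; right; linear_combination h2)
    rcases h3 with h3 | h3 | h3 | h3 <;>
      (have h4 : (0:ℤ) = 2*m ∨ (0:ℤ) = 2*m+1 ∨ (1:ℤ) = 2*m ∨ (1:ℤ) = 2*m+1 := by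
        first
          | (left; exact_mod_cast h3)
          | (right; left; exact_mod_cast h3)
          | (right; right; left; exact_mod_cast h3)
          | (right; right; right; exact_mod_cast h3)
       omega)

lemma Vnon_inj (e e' : ℕ) (he : e ≤ 2) (he' : e' ≤ 2) (h : Vnon e = Vnon e') : e = e' := by
  interval_cases e <;> interval_cases e' <;>
    simp only [Vnon0, Vnon1, Vnon2, Aff.mk_inj] at h <;>
    first
      | rfl
      | (exfalso
         obtain ⟨-, h2⟩ := h
         norm_num at h2)

end S16
section S17
open PAFlow

variable {Γ : Type} [Group Γ] (P : OrbifoldPresentation Γ)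

lemma phiBlock_or (hq : P.q = 1) (hor : P.orientable = true) (t : Fin P.g) :
    ∃ φ : Γ →* Aff, φ (P.c ⟨0, P.q_pos⟩) = Zor ∧
      ∀ n ≤ w0Len P, φ (uu P n) = Vor (min 4 (n - (P.p + 4 * (P.g - 1 - (t : ℕ))))) := by
  have hV : (if P.orientable then
        (List.ofFn fun i => ⁅(fun s => if s = t then Aor else 1) i,
          (fun s => if s = t then Bor else 1) i⁆).prod
      else (List.ofFn fun i => ((fun s => if s = t then Aor else 1) i) ^ 2).prod) *
      (List.ofFn fun _ : Fin P.p => (1 : Aff)).prod = Zor := by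
    rw [if_pos hor, prod_ofFn_one (fun _ : Fin P.p => (1 : Aff)) (fun _ => rfl), mul_one]
    rw [prod_ofFn_single P.g _ (t : ℕ) t.isLt ?hsupp]
    · simp [Fin.eta, Zor]
    · intro i hi
      have hne : i ≠ t := fun hc => hi (by rw [hc])
      simp [if_neg hne]
  obtain ⟨φ, ha', hb', hd', hc'⟩ := lift_exists P _ _ _ hq
    (fun hno => absurd (hor ▸ hno) (by simp)) (fun j => one_pow _) Zor hV
  refine ⟨φ, hc', ?_⟩
  have ht := t.isLt
  apply u_eval P φ _ (by simp [Vor]) (w0Len P)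
  intro n hn
  by_cases hnp : n < P.p
  · rw [letter_d P n hnp, hd']
    rw [one_mul]
    congr 1
    omega
  · push_neg at hnp
    have hl := w0Len_or P hor
    have hdm := Nat.div_add_mod (n - P.p) 4
    have hm4 : (n - P.p) % 4 < 4 := Nat.mod_lt _ (by omega)
    have hs4 : (n - P.p) / 4 < P.g := by omega
    rw [letter_free_or P hor n hnp hn]
    by_cases hbt : P.g - 1 - (n - P.p) / 4 = (t : ℕ)
    · -- the letter lies in block t
      have hft : (⟨P.g - 1 - (n - P.p) / 4, by omega⟩ : Fin P.g) = t := Fin.ext hbt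
      have he1 : min 4 (n - (P.p + 4 * (P.g - 1 - (t : ℕ)))) = (n - P.p) % 4 := by omega
      have he2 : min 4 (n + 1 - (P.p + 4 * (P.g - 1 - (t : ℕ)))) = (n - P.p) % 4 + 1 := by
        omega
      rw [he1, he2]
      have hcases : (n - P.p) % 4 = 0 ∨ (n - P.p) % 4 = 1 ∨ (n - P.p) % 4 = 2 ∨
          (n - P.p) % 4 = 3 := by omega
      rcases hcases with h | h | h | h
      · rw [if_pos h, map_inv, hb', if_pos hft, h]
        simp [Vor]
      · rw [if_neg (by omega), if_pos h, map_inv, ha', if_pos hft, h]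
        simp [Vor]
      · rw [if_neg (by omega), if_neg (by omega), if_pos h, hb', if_pos hft, h]
        simp [Vor]
      · rw [if_neg (by omega), if_neg (by omega), if_neg (by omega), ha', if_pos hft, h]
        simp [Vor]
    · -- the letter lies in another block
      have hft : (⟨P.g - 1 - (n - P.p) / 4, by omega⟩ : Fin P.g) ≠ t :=
        fun hc => hbt (congrArg Fin.val hc)
      have hval : φ ((if (n - P.p) % 4 = 0 then
          (P.b ⟨P.g - 1 - (n - P.p) / 4, by rw [w0Len_or P hor] at hn; omega⟩)⁻¹
         else if (n - P.p) % 4 = 1 then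
          (P.a ⟨P.g - 1 - (n - P.p) / 4, by rw [w0Len_or P hor] at hn; omega⟩)⁻¹
         else if (n - P.p) % 4 = 2 then
          P.b ⟨P.g - 1 - (n - P.p) / 4, by rw [w0Len_or P hor] at hn; omega⟩
         else
          P.a ⟨P.g - 1 - (n - P.p) / 4, by rw [w0Len_or P hor] at hn; omega⟩)) = 1 := by
        split_ifs <;>
          simp only [map_inv, ha', hb', if_neg hft, inv_one]
      rw [hval, one_mul]
      congr 1
      omega

lemma phiBlock_non (hq : P.q = 1) (hor : P.orientable = false) (t : Fin P.g) :
    ∃ φ : Γ →* Aff, φ (P.c ⟨0, P.q_pos⟩) = Znon ∧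
      ∀ n ≤ w0Len P, φ (uu P n) = Vnon (min 2 (n - (P.p + 2 * (P.g - 1 - (t : ℕ))))) := by
  have hV : (if P.orientable then
        (List.ofFn fun i => ⁅(fun s => if s = t then Anon else 1) i,
          (fun _ : Fin P.g => (1 : Aff)) i⁆).prod
      else (List.ofFn fun i => ((fun s => if s = t then Anon else 1) i) ^ 2).prod) *
      (List.ofFn fun _ : Fin P.p => (1 : Aff)).prod = Znon := by
    rw [if_neg (by simp [hor]), prod_ofFn_one (fun _ : Fin P.p => (1 : Aff)) (fun _ => rfl),
      mul_one]
    rw [prod_ofFn_single P.g _ (t : ℕ) t.isLt ?hsupp]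
    · simp only [Fin.eta, if_pos rfl]; rfl
    · intro i hi
      have hne : i ≠ t := fun hc => hi (by rw [hc])
      simp [if_neg hne]
  obtain ⟨φ, ha', hb', hd', hc'⟩ := lift_exists P _ _ _ hq
    (fun _ _ => rfl) (fun j => one_pow _) Znon hV
  refine ⟨φ, hc', ?_⟩
  have ht := t.isLt
  apply u_eval P φ _ (by simp [Vnon]) (w0Len P)
  intro n hn
  by_cases hnp : n < P.p
  · rw [letter_d P n hnp, hd']
    rw [one_mul]
    congr 1
    omega
  · push_neg at hnp
    have hl := w0Len_non P hor
    have hdm := Nat.div_add_mod (n - P.p) 2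
    have hm2 : (n - P.p) % 2 < 2 := Nat.mod_lt _ (by omega)
    have hs2 : (n - P.p) / 2 < P.g := by omega
    rw [letter_free_non P hor n hnp hn]
    by_cases hbt : P.g - 1 - (n - P.p) / 2 = (t : ℕ)
    · have hft : (⟨P.g - 1 - (n - P.p) / 2, by omega⟩ : Fin P.g) = t := Fin.ext hbt
      have he1 : min 2 (n - (P.p + 2 * (P.g - 1 - (t : ℕ)))) = (n - P.p) % 2 := by omega
      have he2 : min 2 (n + 1 - (P.p + 2 * (P.g - 1 - (t : ℕ)))) = (n - P.p) % 2 + 1 := by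
        omega
      rw [he1, he2, ha', if_pos hft]
      have : (n - P.p) % 2 = 0 ∨ (n - P.p) % 2 = 1 := by omega
      rcases this with h | h <;> rw [h] <;> simp [Vnon]
    · have hft : (⟨P.g - 1 - (n - P.p) / 2, by omega⟩ : Fin P.g) ≠ t :=
        fun hc => hbt (congrArg Fin.val hc)
      rw [ha', if_neg hft, one_mul]
      congr 1
      omega

lemma phiD (hq : P.q = 1) (r : Fin P.p) (x : Aff) (hx : x ^ (P.α r) = 1) :
    ∃ φ : Γ →* Aff, φ (P.c ⟨0, P.q_pos⟩) = x ∧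
      ∀ n ≤ w0Len P, φ (uu P n) = if P.p - (r : ℕ) ≤ n then x else 1 := by
  have hV : (if P.orientable then
        (List.ofFn fun i : Fin P.g => ⁅(1 : Aff), (1 : Aff)⁆).prod
      else (List.ofFn fun i : Fin P.g => (1 : Aff) ^ 2).prod) *
      (List.ofFn fun j => if j = r then x else 1).prod = x := by
    have h2 : (List.ofFn fun j => if j = r then x else 1).prod = x := by
      rw [prod_ofFn_single P.p _ (r : ℕ) r.isLt ?hsupp]
      · simp [Fin.eta]
      · intro i hi
        exact if_neg (fun hc => hi (by rw [hc]))
    rw [h2]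
    split_ifs
    · rw [prod_ofFn_one _ (fun _ => by simp), one_mul]
    · rw [prod_ofFn_one _ (fun _ => one_pow 2), one_mul]
  have hd : ∀ j, (if j = r then x else 1) ^ (P.α j) = 1 := by
    intro j
    by_cases hj : j = r
    · rw [if_pos hj, hj, hx]
    · rw [if_neg hj, one_pow]
  obtain ⟨φ, ha', hb', hd', hc'⟩ := lift_exists P (fun _ => 1) (fun _ => 1) _ hq
    (fun _ _ => rfl) hd x hV
  refine ⟨φ, hc', ?_⟩
  have hrlt := r.isLt
  apply u_eval P φ _ (by rw [if_neg (by omega)]) (w0Len P)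
  intro n hn
  by_cases hnp : n < P.p
  · rw [letter_d P n hnp, hd']
    by_cases hnr : P.p - 1 - n = (r : ℕ)
    · have : (⟨P.p - 1 - n, by omega⟩ : Fin P.p) = r := Fin.ext hnr
      rw [if_pos this, if_neg (by omega), if_pos (by omega), mul_one]
    · have : (⟨P.p - 1 - n, by omega⟩ : Fin P.p) ≠ r :=
        fun hc => hnr (congrArg Fin.val hc)
      rw [if_neg this, one_mul]
      by_cases hc : P.p - (r : ℕ) ≤ n
      · rw [if_pos hc, if_pos (by omega)]
      · rw [if_neg hc, if_neg (by omega)]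
  · push_neg at hnp
    have hφ1 : φ ((LL P).getD n 1) = 1 := by
      by_cases hor : P.orientable = true
      · rw [letter_free_or P hor n hnp hn]
        split_ifs <;> simp only [map_inv, ha', hb', inv_one]
      · rw [letter_free_non P (by simpa using hor) n hnp hn, ha']
    rw [hφ1, one_mul, if_pos (by omega), if_pos (by omega)]

lemma phiPair (hq : P.q = 1) (hg : P.g = 0) (r : Fin P.p) (hr0 : 0 < (r : ℕ))
    (hp0 : 0 < P.p) (ζu ξu : ℂˣ)
    (hζ : ((⟨ζu, 0⟩ : Aff)) ^ (P.α ⟨0, hp0⟩) = 1)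
    (hξ : ((⟨ξu, 1 - (ξu : ℂ)⟩ : Aff)) ^ (P.α r) = 1) :
    ∃ φ : Γ →* Aff, φ (P.c ⟨0, P.q_pos⟩) = (⟨ζu, 0⟩ : Aff) * ⟨ξu, 1 - (ξu : ℂ)⟩ ∧
      ∀ n ≤ P.p - 1, φ (uu P n) =
        if P.p - (r : ℕ) ≤ n then (⟨ξu, 1 - (ξu : ℂ)⟩ : Aff) else 1 := by
  set fd : Fin P.p → Aff :=
    fun j => if (j : ℕ) = 0 then ⟨ζu, 0⟩ else if j = r then ⟨ξu, 1 - (ξu : ℂ)⟩ else 1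
    with hfd
  have hV : (if P.orientable then
        (List.ofFn fun i : Fin P.g => ⁅(1 : Aff), (1 : Aff)⁆).prod
      else (List.ofFn fun i : Fin P.g => (1 : Aff) ^ 2).prod) *
      (List.ofFn fd).prod = (⟨ζu, 0⟩ : Aff) * ⟨ξu, 1 - (ξu : ℂ)⟩ := by
    have h2 : (List.ofFn fd).prod = (⟨ζu, 0⟩ : Aff) * ⟨ξu, 1 - (ξu : ℂ)⟩ := by
      rw [prod_ofFn_two P.p fd (r : ℕ) hr0 r.isLt ?hsupp]
      · have e1 : fd ⟨0, by omega⟩ = ⟨ζu, 0⟩ := by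
          show (if ((⟨0, by omega⟩ : Fin P.p) : ℕ) = 0 then (⟨ζu, 0⟩ : Aff)
            else if (⟨0, by omega⟩ : Fin P.p) = r then ⟨ξu, 1 - (ξu : ℂ)⟩ else 1) = _
          rw [if_pos rfl]
        have e2 : fd ⟨(r : ℕ), r.isLt⟩ = ⟨ξu, 1 - (ξu : ℂ)⟩ := by
          show (if ((⟨(r : ℕ), r.isLt⟩ : Fin P.p) : ℕ) = 0 then (⟨ζu, 0⟩ : Aff)
            else if (⟨(r : ℕ), r.isLt⟩ : Fin P.p) = r then ⟨ξu, 1 - (ξu : ℂ)⟩ else 1) = _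
          rw [if_neg (by simp only [Fin.val_mk]; omega), if_pos (Fin.ext rfl)]
        rw [e1, e2]
      · intro i hi0 hir
        rw [hfd]
        simp only
        rw [if_neg hi0, if_neg (fun hc => hir (congrArg Fin.val hc))]
    rw [h2]
    split_ifs
    · rw [prod_ofFn_one _ (fun i => absurd i.isLt (by omega)), one_mul]
    · rw [prod_ofFn_one _ (fun i => absurd i.isLt (by omega)), one_mul]
  have hd : ∀ j, fd j ^ (P.α j) = 1 := by
    intro j
    rw [hfd]
    by_cases hj0 : (j : ℕ) = 0
    · have : j = ⟨0, hp0⟩ := Fin.ext hj0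
      rw [this]
      simpa using hζ
    · by_cases hjr : j = r
      · rw [hjr]
        simp only [if_neg (by omega : ((r : Fin P.p) : ℕ) ≠ 0), if_pos rfl]
        exact hξ
      · simp only [if_neg hj0, if_neg hjr, one_pow]
  obtain ⟨φ, ha', hb', hd', hc'⟩ := lift_exists P (fun _ => 1) (fun _ => 1) fd hq
    (fun _ _ => rfl) hd _ hV
  refine ⟨φ, hc', ?_⟩
  have hrlt := r.isLt
  apply u_eval P φ _ (by rw [if_neg (by omega)]) (P.p - 1)
  intro n hn
  have hnp : n < P.p := by omega
  rw [letter_d P n hnp, hd', hfd]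
  simp only
  rw [if_neg (by omega : ¬(P.p - 1 - n = 0))]
  by_cases hnr : P.p - 1 - n = (r : ℕ)
  · have : (⟨P.p - 1 - n, by omega⟩ : Fin P.p) = r := Fin.ext hnr
    rw [if_pos this, if_neg (by omega), if_pos (by omega), mul_one]
  · have : (⟨P.p - 1 - n, by omega⟩ : Fin P.p) ≠ r :=
      fun hc => hnr (congrArg Fin.val hc)
    rw [if_neg this, one_mul]
    by_cases hc : P.p - (r : ℕ) ≤ n
    · rw [if_pos hc, if_pos (by omega)]
    · rw [if_neg hc, if_neg (by omega)]

end S17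
section S18
open PAFlow

lemma exists_root_unit (α : ℕ) (hα : 2 ≤ α) :
    ∃ zu : ℂˣ, (zu : ℂ) ≠ 1 ∧ zu ^ α = 1 := by
  have h := Complex.isPrimitiveRoot_exp α (by omega)
  refine ⟨Units.mk0 _ (h.ne_zero (by omega)), ?_, ?_⟩
  · simpa using h.ne_one (by omega)
  · apply Units.ext
    rw [Units.val_pow_eq_pow_val]
    simpa using h.pow_eq_one

variable {Γ : Type} [Group Γ]

theorem aux14 (P : OrbifoldPresentation Γ) (hq : P.q = 1) {μ : Set S1}
    (σg : Γ →* Equiv.Perm (Gap μ)) (I₀ : Gap μ)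
    (hstab : gapStab σg I₀ = Subgroup.zpowers (P.c ⟨0, P.q_pos⟩))
    (i j : ℕ) (hij : i < j) (hj : j < w0Len P)
    (heq : gapSeq σg I₀ (LL P) i = gapSeq σg I₀ (LL P) j) : False := by
  have h1 : σg (uu P i) I₀ = σg (uu P j) I₀ := by
    rw [← gapSeq_u, ← gapSeq_u, heq]
  have h2 : (uu P j)⁻¹ * uu P i ∈ gapStab σg I₀ := by
    show σg ((uu P j)⁻¹ * uu P i) I₀ = I₀
    rw [map_mul, Equiv.Perm.mul_apply, h1, map_inv]
    exact (σg (uu P j)).symm_apply_apply _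
  rw [hstab, Subgroup.mem_zpowers_iff] at h2
  obtain ⟨m, hm⟩ := h2
  have hE : uu P i = uu P j * (P.c ⟨0, P.q_pos⟩) ^ m := by
    rw [hm, mul_inv_cancel_left]
  by_cases hg : P.g = 0
  · -- no blocks : the two-rotations argument
    have hp : w0Len P = P.p := by unfold w0Len; split <;> omega
    rw [hp] at hj
    have hp2 : 2 ≤ P.p := by omega
    have hr0 : 0 < P.p - j := by omega
    obtain ⟨ζu, hζ1, hζα⟩ := exists_root_unit (P.α ⟨0, by omega⟩) (P.α_two _)
    obtain ⟨ξu, hξ1, hξα⟩ := exists_root_unit (P.α ⟨P.p - j, by omega⟩) (P.α_two _)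
    obtain ⟨φ, hc', hev⟩ := phiPair P hq hg ⟨P.p - j, by omega⟩ hr0 (by omega) ζu ξu
      (by rw [Aff.scale_pow, hζα]; rfl)
      (by rw [Aff.rot1_pow, hξα]; apply Aff.ext <;> simp)
    have hEφ := congrArg φ hE
    rw [map_mul, map_zpow, hev i (by omega), hev j (by omega), hc'] at hEφ
    rw [if_neg (by simp only [Fin.val_mk]; omega),
      if_pos (by simp only [Fin.val_mk]; omega)] at hEφ
    exact Aff.rot_core ζu ξu hζ1 hξ1 m (inv_eq_of_mul_eq_one_right hEφ.symm)
  · -- at least one block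
    by_cases hor : P.orientable = true
    · have hl := w0Len_or P hor
      obtain ⟨φ₀, hc0, hev0⟩ := phiBlock_or P hq hor ⟨0, by omega⟩
      have hEφ := congrArg φ₀ hE
      rw [map_mul, map_zpow, hev0 i (by omega), hev0 j (by omega), hc0] at hEφ
      have hm0 : m = 0 := coset0_or _ _ (by simp only [Fin.val_mk]; omega)
        (by simp only [Fin.val_mk]; omega) m hEφ
      rw [hm0, zpow_zero, mul_one] at hE
      by_cases hjp : j ≤ P.p
      · -- detect a d-letter
        obtain ⟨ξu, hξ1, hξα⟩ := exists_root_unit (P.α ⟨P.p - j, by omega⟩) (P.α_two _)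
        obtain ⟨φ, hc', hev⟩ := phiD P hq ⟨P.p - j, by omega⟩ ⟨ξu, 0⟩
          (by rw [Aff.scale_pow, hξα]; rfl)
        have hEφ' := congrArg φ hE
        rw [hev i (by omega), hev j (by omega),
          if_neg (by simp only [Fin.val_mk]; omega),
          if_pos (by simp only [Fin.val_mk]; omega)] at hEφ'
        have : (1 : ℂˣ) = ξu := by
          have := (Aff.mk_inj _ _ _ _).1 hEφ'
          exact this.1
        exact hξ1 (by rw [← this]; rfl)
      · -- detect an a/b-letter
        push_neg at hjp
        have hdm := Nat.div_add_mod (j - 1 - P.p) 4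
        have hm4 : (j - 1 - P.p) % 4 < 4 := Nat.mod_lt _ (by omega)
        have hs' : (j - 1 - P.p) / 4 < P.g := by omega
        obtain ⟨φt, hct, hevt⟩ := phiBlock_or P hq hor ⟨P.g - 1 - (j - 1 - P.p) / 4, by omega⟩
        have hEφ' := congrArg φt hE
        rw [hevt i (by omega), hevt j (by omega)] at hEφ'
        have heq' := Vor_inj _ _ (by omega) (by omega) hEφ'
        simp only [Fin.val_mk] at heq'
        omega
    · have hor' : P.orientable = false := by simpa using hor
      have hl := w0Len_non P hor'
      obtain ⟨φ₀, hc0, hev0⟩ := phiBlock_non P hq hor' ⟨0, by omega⟩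
      have hEφ := congrArg φ₀ hE
      rw [map_mul, map_zpow, hev0 i (by omega), hev0 j (by omega), hc0] at hEφ
      have hm0 : m = 0 := coset0_non _ _ (by simp only [Fin.val_mk]; omega)
        (by simp only [Fin.val_mk]; omega) m hEφ
      rw [hm0, zpow_zero, mul_one] at hE
      by_cases hjp : j ≤ P.p
      · obtain ⟨ξu, hξ1, hξα⟩ := exists_root_unit (P.α ⟨P.p - j, by omega⟩) (P.α_two _)
        obtain ⟨φ, hc', hev⟩ := phiD P hq ⟨P.p - j, by omega⟩ ⟨ξu, 0⟩
          (by rw [Aff.scale_pow, hξα]; rfl)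
        have hEφ' := congrArg φ hE
        rw [hev i (by omega), hev j (by omega),
          if_neg (by simp only [Fin.val_mk]; omega),
          if_pos (by simp only [Fin.val_mk]; omega)] at hEφ'
        have : (1 : ℂˣ) = ξu := by
          have := (Aff.mk_inj _ _ _ _).1 hEφ'
          exact this.1
        exact hξ1 (by rw [← this]; rfl)
      · push_neg at hjp
        have hdm := Nat.div_add_mod (j - 1 - P.p) 2
        have hm2 : (j - 1 - P.p) % 2 < 2 := Nat.mod_lt _ (by omega)
        have hs' : (j - 1 - P.p) / 2 < P.g := by omega
        obtain ⟨φt, hct, hevt⟩ := phiBlock_non P hq hor' ⟨P.g - 1 - (j - 1 - P.p) / 2, by omega⟩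
        have hEφ' := congrArg φt hE
        rw [hevt i (by omega), hevt j (by omega)] at hEφ'
        have heq' := Vnon_inj _ _ (by omega) (by omega) hEφ'
        simp only [Fin.val_mk] at heq'
        omega

end S18


open PAFlow in
/-- writing `c₁ = s_ℓ ⋯ s₁` (the word `w₀`), the successive images
`I_i = σ(s_i) I_{i-1}` of a periodic gap `I₀` whose stabilizer is the cyclic subgroup
generated by `c₁` are pairwise distinct for `0 ≤ i ≤ ℓ - 1`. -/
theorem statement14 {Γ : Type} [Group Γ] (P : OrbifoldPresentation Γ)
    (hq : P.q = 1) (hgp : 1 ≤ P.g ∨ (P.g = 0 ∧ 2 ≤ P.p))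
    (ρ : Γ →* (S1 ≃ₜ S1)) (μ : Set S1) (k : ℕ)
    (T : TauData μ k) (σg : Γ →* Equiv.Perm (Gap μ))
    (hrep : IsMTSRep ρ μ k T σg)
    (I₀ : Gap μ) (hper : gapStab σg I₀ ≠ ⊥)
    (hstab : gapStab σg I₀ = Subgroup.zpowers (P.c ⟨0, P.q_pos⟩)) :
    ∀ i j : ℕ, i < w0Len P → j < w0Len P → i ≠ j →
      gapSeq σg I₀ (((w0 P).map (evLetter P)).reverse) i ≠
      gapSeq σg I₀ (((w0 P).map (evLetter P)).reverse) j := by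
  intro i j hi hj hne heq
  rcases Nat.lt_or_ge i j with h | h
  · exact aux14 P hq σg I₀ hstab i j h hj heq
  · exact aux14 P hq σg I₀ hstab j i (by omega) hi heq.symm
end
end
end
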